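/- arXiv:2211.04093 — 4 statements merged into one kernel-verified Lean document; each statement's English description precedes it below -/
import Mathlib

section
/- Let X and Y be proper, geodesically complete, Gromov δ-hyperbolic, Busemann metric spaces, let ε > 0, R > 1/ε, and let α = (α^X, α^Y): [0,R] → X⋈Y be an ε-monotone continuous (k,c)-quasigeodesic segment. Then there exists a constant M depending only on X⋈Y, k and c such that the projections α^X: [0,R] → X and α^Y: [0,R] → Y are (4k, MεR)-quasigeodesic segments. -/
open Set Filter MeasureTheory
open scoped ENNReal

noncomputable section

/-- `Φ` is a `(k,c)`-quasi-isometry with respect to the explicit distance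
functions `dA` and `dB`. -/
def QIWith {A B : Type*} (dA : A → A → ℝ) (dB : B → B → ℝ) (k c : ℝ) (Φ : A → B) : Prop :=
  (∀ x x' : A, k⁻¹ * dA x x' - c ≤ dB (Φ x) (Φ x') ∧ dB (Φ x) (Φ x') ≤ k * dA x x' + c) ∧
    ∀ y : B, ∃ x : A, dB (Φ x) y ≤ c

/-- `γ` is a geodesic (parametrized by arclength) on the parameter set `s`,
with respect to the distance function `d`. -/
def IsGeodesicOnD {Z : Type*} (d : Z → Z → ℝ) (γ : ℝ → Z) (s : Set ℝ) : Prop :=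
  ∀ t ∈ s, ∀ u ∈ s, d (γ t) (γ u) = |t - u|

/-- `γ` is a geodesic parametrized proportionally to arclength on `s`. -/
def IsAffineGeodesicOnD {Z : Type*} (d : Z → Z → ℝ) (γ : ℝ → Z) (s : Set ℝ) : Prop :=
  ∃ c : ℝ, 0 ≤ c ∧ ∀ t ∈ s, ∀ u ∈ s, d (γ t) (γ u) = c * |t - u|

/-- Gromov hyperbolicity (four-point condition) for the distance function `d`. -/
def GromovHyperbolicD {Z : Type*} (d : Z → Z → ℝ) (δ : ℝ) : Prop :=
  ∀ x y z w : Z, d x y + d z w ≤ max (d x z + d y w) (d x w + d y z) + 2 * δ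

/-- Every two points are joined by a geodesic. -/
def GeodesicSpaceD {Z : Type*} (d : Z → Z → ℝ) : Prop :=
  ∀ x y : Z, ∃ γ : ℝ → Z, γ 0 = x ∧ γ (d x y) = y ∧ IsGeodesicOnD d γ (Icc 0 (d x y))

/-- Every geodesic segment extends to a bi-infinite geodesic line. -/
def GeodesicallyCompleteD {Z : Type*} (d : Z → Z → ℝ) : Prop :=
  ∀ (γ : ℝ → Z) (a b : ℝ), a ≤ b → IsGeodesicOnD d γ (Icc a b) →
    ∃ γ' : ℝ → Z, IsGeodesicOnD d γ' univ ∧ EqOn γ γ' (Icc a b)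

/-- Busemann convexity: the distance between any two geodesics parametrized
proportionally to arclength is a convex function. -/
def BusemannD {Z : Type*} (d : Z → Z → ℝ) : Prop :=
  ∀ (γ₁ γ₂ : ℝ → Z) (s : Set ℝ), Convex ℝ s →
    IsAffineGeodesicOnD d γ₁ s → IsAffineGeodesicOnD d γ₂ s →
    ConvexOn ℝ s fun t => d (γ₁ t) (γ₂ t)

/-- A proper, geodesically complete, Gromov `δ`-hyperbolic, Busemann metric space
together with a distinguished vertical geodesic ray `ray` from the base point
`ray 0`, determining a boundary point `a ∈ ∂X`. -/
structure HoroSpace (X : Type*) [MetricSpace X] where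
  δ : ℝ
  δ_nonneg : 0 ≤ δ
  proper : ProperSpace X
  hyperbolic : GromovHyperbolicD (fun x y : X => dist x y) δ
  geodesic : GeodesicSpaceD (fun x y : X => dist x y)
  geodComplete : GeodesicallyCompleteD (fun x y : X => dist x y)
  busemann : BusemannD (fun x y : X => dist x y)
  ray : ℝ → X
  ray_geodesic : IsGeodesicOnD (fun x y : X => dist x y) ray (Ici 0)

/-- The height function `h(x) = −limsup_{t→∞} (d(x, V_w(t)) − t)`
(the opposite of the Busemann function of the distinguished ray). -/
def HoroSpace.height {X : Type*} [MetricSpace X] (H : HoroSpace X) (x : X) : ℝ :=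
  - Filter.limsup (fun t : ℝ => dist x (H.ray t) - t) Filter.atTop

/-- The disk `D_r(p)` of radius `r` around `p` inside the horosphere through `p`. -/
def HoroSpace.disk {X : Type*} [MetricSpace X] (H : HoroSpace X) (r : ℝ) (p : X) : Set X :=
  {x : X | H.height x = H.height p ∧ dist x p ≤ r}

/-- The projection `π_z(A)`: points of the horosphere at height `z` whose upward
vertical geodesic ray meets `A`. -/
def HoroSpace.proj {X : Type*} [MetricSpace X] (H : HoroSpace X) (z : ℝ) (A : Set X) :
    Set X :=
  {x : X | H.height x = z ∧ ∃ γ : ℝ → X,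
      IsGeodesicOnD (fun a b : X => dist a b) γ (Ici z) ∧
      (∀ t ∈ Ici z, H.height (γ t) = t) ∧ γ z = x ∧ ∃ t ∈ Ici z, γ t ∈ A}

/-- The horospherical product `X ⋈ Y`: pairs whose heights add up to zero. -/
abbrev HoroProd {X Y : Type*} [MetricSpace X] [MetricSpace Y]
    (HX : HoroSpace X) (HY : HoroSpace Y) : Type _ :=
  {p : X × Y // HX.height p.1 + HY.height p.2 = 0}

/-- `V` is a vertical geodesic of `X ⋈ Y` on the parameter set `s`: a pair of
vertical geodesics of `X` and `Y` at opposite heights, parametrized by arclength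
by its height (up to orientation and an additive shift). -/
def IsVerticalOn {X Y : Type*} [MetricSpace X] [MetricSpace Y]
    (HX : HoroSpace X) (HY : HoroSpace Y)
    (V : ℝ → HoroProd HX HY) (s : Set ℝ) : Prop :=
  IsGeodesicOnD (fun a b : X => dist a b) (fun t => (V t).1.1) s ∧
  IsGeodesicOnD (fun a b : Y => dist a b) (fun t => (V t).1.2) s ∧
  ∀ t ∈ s, ∀ u ∈ s, |HX.height ((V t).1.1) - HX.height ((V u).1.1)| = |t - u|

/-- A distance `d_⋈` on `X ⋈ Y` induced by an admissible norm: the height is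
`1`-Lipschitz, `2·d_⋈ ≥ d_X + d_Y`, `d_⋈` agrees with
`d_X + d_Y − Δh` up to a bounded additive constant, and vertical geodesics of
`X ⋈ Y` are geodesics for `d_⋈`. -/
structure HoroMetric {X Y : Type*} [MetricSpace X] [MetricSpace Y]
    (HX : HoroSpace X) (HY : HoroSpace Y) where
  d : HoroProd HX HY → HoroProd HX HY → ℝ
  d_self : ∀ p, d p p = 0
  d_comm : ∀ p q, d p q = d q p
  d_triangle : ∀ p q r, d p r ≤ d p q + d q r
  eq_of_d : ∀ p q, d p q = 0 → p = q
  height_lip : ∀ p q, |HX.height p.1.1 - HX.height q.1.1| ≤ d p q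
  two_d_ge : ∀ p q, dist p.1.1 q.1.1 + dist p.1.2 q.1.2 ≤ 2 * d p q
  C : ℝ
  C_nonneg : 0 ≤ C
  approx : ∀ p q,
    |d p q - (dist p.1.1 q.1.1 + dist p.1.2 q.1.2 -
      |HX.height p.1.1 - HX.height q.1.1|)| ≤ C
  vertical_geodesic : ∀ (V : ℝ → HoroProd HX HY) (s : Set ℝ),
    IsVerticalOn HX HY V s → ∀ t ∈ s, ∀ u ∈ s, d (V t) (V u) = |t - u|

/-- `γ` is a `(k,c)`-quasigeodesic on the parameter set `s`. -/
def IsQGOn {Z : Type*} (d : Z → Z → ℝ) (k c : ℝ) (γ : ℝ → Z) (s : Set ℝ) : Prop :=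
  ∀ t ∈ s, ∀ u ∈ s,
    k⁻¹ * |t - u| - c ≤ d (γ t) (γ u) ∧ d (γ t) (γ u) ≤ k * |t - u| + c

/-- `γ` is continuous on `s` with respect to the distance function `d`. -/
def ContOnD {Z : Type*} (d : Z → Z → ℝ) (γ : ℝ → Z) (s : Set ℝ) : Prop :=
  ∀ t ∈ s, ∀ ε > (0 : ℝ), ∃ η > (0 : ℝ), ∀ u ∈ s, |u - t| < η → d (γ t) (γ u) < ε

/-- `γ : [a,b] → Z` is `ε`-monotone with respect to the height function `hgt`:
equal heights force parameters to be `ε·(b−a)`-close. -/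
def EpsMonotoneOn {Z : Type*} (hgt : Z → ℝ) (ε : ℝ) (γ : ℝ → Z) (a b : ℝ) : Prop :=
  ∀ t₁ ∈ Icc a b, ∀ t₂ ∈ Icc a b, hgt (γ t₁) = hgt (γ t₂) → |t₁ - t₂| ≤ ε * (b - a)

/-- The closed `r`-neighbourhood of `A` with respect to the distance function `d`. -/
def nbhdD {Z : Type*} (d : Z → Z → ℝ) (r : ℝ) (A : Set Z) : Set Z :=
  {p : Z | ∃ a ∈ A, d p a ≤ r}

namespace Statement6Aux

variable {Z : Type*} [MetricSpace Z]

/-- The Gromov product of `x` and `y` with respect to `w`. -/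
def gp (w x y : Z) : ℝ := (dist x w + dist y w - dist x y) / 2

lemma gp_min {δ : ℝ} (hyp : GromovHyperbolicD (fun a b : Z => dist a b) δ)
    (w x y z : Z) : min (gp w x y) (gp w y z) - δ ≤ gp w x z := by
  have h := hyp x z y w
  dsimp only at h
  have hzy : dist z y = dist y z := dist_comm z y
  rcases max_cases (dist x y + dist z w) (dist x w + dist z y) with ⟨he, _⟩ | ⟨he, _⟩ <;>
    rw [he] at h
  · have h1 : gp w x y - δ ≤ gp w x z := by unfold gp; linarith
    have := min_le_left (gp w x y) (gp w y z); linarith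
  · have h1 : gp w y z - δ ≤ gp w x z := by unfold gp; linarith
    have := min_le_right (gp w x y) (gp w y z); linarith

lemma gp_chain {δ : ℝ} (hδ : 0 ≤ δ) (hyp : GromovHyperbolicD (fun a b : Z => dist a b) δ)
    (w : Z) :
    ∀ m n : ℕ, 1 ≤ n → n ≤ 2 ^ m → ∀ p : ℕ → Z, ∀ G : ℝ,
      (∀ i < n, G ≤ gp w (p i) (p (i + 1))) → G - δ * m ≤ gp w (p 0) (p n) := by
  intro m
  induction m with
  | zero =>
    intro n h1 h2 p G hG
    have hn : n = 1 := le_antisymm h2 h1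
    subst hn
    have := hG 0 (by norm_num)
    simpa using this
  | succ m ih =>
    intro n h1 h2 p G hG
    by_cases hn : n ≤ 2 ^ m
    · have h := ih n h1 hn p G hG
      have hm : δ * (m : ℝ) ≤ δ * ((m : ℕ) + 1 : ℕ) := by
        apply mul_le_mul_of_nonneg_left _ hδ
        push_cast; linarith
      push_cast at hm ⊢
      linarith
    · push_neg at hn
      have h1' : 1 ≤ 2 ^ m := Nat.one_le_two_pow
      have ha := ih (2 ^ m) h1' le_rfl p G (fun i hi => hG i (lt_trans hi hn))
      have hb := ih (n - 2 ^ m) (by omega) (by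
          have : n ≤ 2 * 2 ^ m := by
            have := h2; rw [pow_succ] at this; omega
          omega) (fun i => p (2 ^ m + i)) G (by
          intro i hi
          have hg2 : G ≤ gp w (p (2 ^ m + i)) (p (2 ^ m + i + 1)) := hG (2 ^ m + i) (by omega)
          show G ≤ gp w (p (2 ^ m + i)) (p (2 ^ m + (i + 1)))
          have e : 2 ^ m + (i + 1) = 2 ^ m + i + 1 := by omega
          rw [e]
          exact hg2)
      have hq0 : (fun i => p (2 ^ m + i)) 0 = p (2 ^ m) := by simp
      have hqn : (fun i => p (2 ^ m + i)) (n - 2 ^ m) = p n := by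
        simp only []
        congr 1
        omega
      rw [Nat.add_zero, show 2 ^ m + (n - 2 ^ m) = n by omega] at hb
      have hmin := gp_min hyp w (p 0) (p (2 ^ m)) (p n)
      have hle : G - δ * m ≤ min (gp w (p 0) (p (2 ^ m))) (gp w (p (2 ^ m)) (p n)) :=
        le_min ha hb
      push_cast
      linarith

variable (H : HoroSpace Z)

lemma ray_dist (a b : ℝ) (ha : 0 ≤ a) (hb : 0 ≤ b) :
    dist (H.ray a) (H.ray b) = |a - b| :=
  H.ray_geodesic a ha b hb

/-- The (monotone regularization of the) Busemann-type function of `H` at `p`. -/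
noncomputable def busF (p : Z) : ℝ → ℝ := fun T => dist p (H.ray (max T 0)) - max T 0

lemma busF_anti (p : Z) : Antitone (busF H p) := by
  intro a b hab
  have h0a : (0:ℝ) ≤ max a 0 := le_max_right _ _
  have h0b : (0:ℝ) ≤ max b 0 := le_max_right _ _
  have hm : max a 0 ≤ max b 0 := max_le_max hab le_rfl
  have hr : dist (H.ray (max a 0)) (H.ray (max b 0)) = |max a 0 - max b 0| :=
    ray_dist H _ _ h0a h0b
  rw [abs_sub_comm, abs_of_nonneg (by linarith)] at hr
  have htri := dist_triangle p (H.ray (max a 0)) (H.ray (max b 0))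
  unfold busF
  linarith

lemma busF_bdd (p : Z) : BddBelow (Set.range (busF H p)) := by
  refine ⟨-dist p (H.ray 0), ?_⟩
  rintro x ⟨T, rfl⟩
  have h0 : (0:ℝ) ≤ max T 0 := le_max_right _ _
  have hr : dist (H.ray 0) (H.ray (max T 0)) = |0 - max T 0| := ray_dist H _ _ le_rfl h0
  rw [zero_sub, abs_neg, abs_of_nonneg h0] at hr
  have htri := dist_triangle (H.ray 0) p (H.ray (max T 0))
  have hdc : dist (H.ray 0) p = dist p (H.ray 0) := dist_comm _ _
  unfold busF
  linarith

/-- The limit of the Busemann function. -/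
noncomputable def busL (p : Z) : ℝ := ⨅ T : ℝ, busF H p T

lemma busF_tendsto (p : Z) : Filter.Tendsto (busF H p) Filter.atTop (nhds (busL H p)) :=
  tendsto_atTop_ciInf (busF_anti H p) (busF_bdd H p)

lemma tendsto_dist_ray (p : Z) :
    Filter.Tendsto (fun T : ℝ => dist p (H.ray T) - T) Filter.atTop (nhds (busL H p)) := by
  apply Filter.Tendsto.congr' _ (busF_tendsto H p)
  filter_upwards [Filter.eventually_ge_atTop (0:ℝ)] with T hT
  unfold busF
  rw [max_eq_left hT]

lemma height_eq_neg_busL (p : Z) : H.height p = - busL H p := by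
  unfold HoroSpace.height
  rw [(tendsto_dist_ray H p).limsup_eq]

lemma tendsto_neg_height (p : Z) :
    Filter.Tendsto (fun T : ℝ => dist p (H.ray T) - T) Filter.atTop (nhds (- H.height p)) := by
  rw [height_eq_neg_busL, neg_neg]
  exact tendsto_dist_ray H p

lemma dist_ray_ge (p : Z) (T : ℝ) (hT : 0 ≤ T) :
    T - H.height p ≤ dist p (H.ray T) := by
  have h1 : busL H p ≤ busF H p T := ciInf_le (busF_bdd H p) T
  unfold busF at h1
  rw [max_eq_left hT] at h1
  have h2 := height_eq_neg_busL H p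
  linarith

/-- Key path lemma: a path moving at bounded speed which stays below height `Hm`
has endpoints at distance at most the sum of depths below `Hm`, up to an error
logarithmic in the length of the path. -/
lemma pathbound (β : ℝ → Z) (t u k c Hm : ℝ) (htu : t ≤ u) (hk : 1 ≤ k) (hc : 0 ≤ c)
    (hspeed : ∀ s ∈ Set.Icc t u, ∀ s' ∈ Set.Icc t u,
      dist (β s) (β s') ≤ 2 * k * |s - s'| + 2 * c)
    (hht : ∀ s ∈ Set.Icc t u, H.height (β s) ≤ Hm) :
    dist (β t) (β u) ≤ (Hm - H.height (β t)) + (Hm - H.height (β u)) + 2 * (k + c)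
      + 2 * H.δ * ((Nat.log 2 (⌈u - t⌉₊ + 1) : ℝ) + 1) := by
  set L := u - t with hL
  have hL0 : 0 ≤ L := by rw [hL]; linarith
  set n : ℕ := ⌈L⌉₊ + 1 with hn
  have hn1 : 1 ≤ n := by omega
  have hnR : (0:ℝ) < (n : ℝ) := by exact_mod_cast Nat.pos_of_ne_zero (by omega)
  have hLn : L ≤ (n : ℝ) := by
    have := Nat.le_ceil L
    have h2 : ((⌈L⌉₊ : ℕ) : ℝ) ≤ (n : ℝ) := by exact_mod_cast Nat.le_succ _
    linarith
  set m : ℕ := Nat.log 2 n + 1 with hm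
  have hnm : n ≤ 2 ^ m := le_of_lt (Nat.lt_pow_succ_log_self one_lt_two n)
  set σ : ℕ → ℝ := fun i => t + (i : ℝ) * (L / n) with hσ
  have hdivnn : 0 ≤ L / (n:ℝ) := div_nonneg hL0 hnR.le
  have hnLn : (n : ℝ) * (L / n) = L := by field_simp
  have hσmem : ∀ i ≤ n, σ i ∈ Set.Icc t u := by
    intro i hi
    constructor
    · have : 0 ≤ (i : ℝ) * (L / n) := mul_nonneg (Nat.cast_nonneg i) hdivnn
      simp only [hσ]; linarith
    · have h1 : (i : ℝ) * (L / n) ≤ (n : ℝ) * (L / n) :=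
        mul_le_mul_of_nonneg_right (by exact_mod_cast hi) hdivnn
      simp only [hσ]
      rw [hL] at hnLn ⊢
      linarith [hnLn]
  have hσ0 : σ 0 = t := by simp [hσ]
  have hσn : σ n = u := by
    simp only [hσ]
    rw [hnLn, hL]; ring
  have hstep : ∀ i < n, dist (β (σ i)) (β (σ (i + 1))) ≤ 2 * (k + c) := by
    intro i hi
    have h1 := hspeed _ (hσmem i hi.le) _ (hσmem (i + 1) hi)
    have hd : |σ i - σ (i + 1)| = L / n := by
      have : σ i - σ (i + 1) = -(L / n) := by
        simp only [hσ]; push_cast; ring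
      rw [this, abs_neg, abs_of_nonneg hdivnn]
    rw [hd] at h1
    have hd1 : L / (n:ℝ) ≤ 1 := by rw [div_le_one hnR]; exact hLn
    have hk0 : (0:ℝ) ≤ 2 * k := by linarith
    nlinarith
  have key : ∀ T : ℝ, 0 ≤ T →
      dist (β t) (β u) ≤ (dist (β t) (H.ray T) - T) + (dist (β u) (H.ray T) - T)
        + 2 * Hm + 2 * (k + c) + 2 * H.δ * (m : ℝ) := by
    intro T hT
    have hG : ∀ i < n, T - Hm - (k + c) ≤ gp (H.ray T) (β (σ i)) (β (σ (i + 1))) := by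
      intro i hi
      have h1 := dist_ray_ge H (β (σ i)) T hT
      have h2 := dist_ray_ge H (β (σ (i + 1))) T hT
      have h3 := hstep i hi
      have h4 := hht _ (hσmem i hi.le)
      have h5 := hht _ (hσmem (i + 1) hi)
      unfold gp
      linarith
    have hchain := gp_chain H.δ_nonneg H.hyperbolic (H.ray T) m n hn1 hnm
      (fun i => β (σ i)) _ hG
    rw [hσ0, hσn] at hchain
    unfold gp at hchain
    linarith
  have hlim1 := tendsto_neg_height H (β t)
  have hlim2 := tendsto_neg_height H (β u)
  have hlim : Filter.Tendsto
      (fun T : ℝ => (dist (β t) (H.ray T) - T) + (dist (β u) (H.ray T) - T)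
        + 2 * Hm + 2 * (k + c) + 2 * H.δ * (m : ℝ)) Filter.atTop
      (nhds ((- H.height (β t)) + (- H.height (β u)) + 2 * Hm + 2 * (k + c)
        + 2 * H.δ * (m : ℝ))) := by
    exact (((hlim1.add hlim2).add_const _).add_const _).add_const _
  have hfin := ge_of_tendsto hlim (Filter.eventually_atTop.mpr ⟨0, fun T hT => key T hT⟩)
  have hmcast : (m : ℝ) = (Nat.log 2 n : ℝ) + 1 := by rw [hm]; push_cast; ring
  rw [hmcast] at hfin
  linarith

/-- A linear function eventually dominates the logarithmic error term. -/
lemma log_linear (d0 a : ℝ) (hd : 0 ≤ d0) (ha : 0 < a) :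
    ∃ K : ℝ, 0 ≤ K ∧ ∀ L : ℝ, 0 ≤ L →
      d0 * ((Nat.log 2 (⌈L⌉₊ + 1) : ℝ) + 1) ≤ a * L + K := by
  have hlog2 : 0 < Real.log 2 := Real.log_pos one_lt_two
  set s : ℝ := 2 * d0 / (a * Real.log 2) + 1 with hs
  have hsnn : 0 ≤ 2 * d0 / (a * Real.log 2) := by positivity
  have hs1 : 1 ≤ s := by rw [hs]; linarith
  have hs0 : 0 < s := lt_of_lt_of_le one_pos hs1
  have hlogs : 0 ≤ Real.log s := Real.log_nonneg hs1
  refine ⟨2 * a + d0 * (Real.log s / Real.log 2 + 1), ?_, ?_⟩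
  · have : 0 ≤ Real.log s / Real.log 2 + 1 := by positivity
    nlinarith
  intro L hL
  set q : ℕ := ⌈L⌉₊ + 1 with hq
  have hq0 : 0 < q := by omega
  have h1 : ((2:ℝ)) ^ (Nat.log 2 q) ≤ (q : ℝ) := by
    exact_mod_cast Nat.pow_log_le_self 2 (by omega)
  have h2 : (Nat.log 2 q : ℝ) * Real.log 2 ≤ Real.log q := by
    have := Real.log_le_log (by positivity) h1
    rwa [Real.log_pow] at this
  have hqL : (q : ℝ) ≤ L + 2 := by
    have := Nat.ceil_lt_add_one hL
    rw [hq]; push_cast; linarith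
  have h3 : Real.log q ≤ Real.log (L + 2) := by
    apply Real.log_le_log (by exact_mod_cast hq0) hqL
  have h4 : Real.log (L + 2) ≤ (L + 2) / s + Real.log s := by
    have h5 : Real.log ((L + 2) / s) ≤ (L + 2) / s - 1 :=
      Real.log_le_sub_one_of_pos (by positivity)
    rw [Real.log_div (by positivity) (ne_of_gt hs0)] at h5
    linarith
  have h6 : (Nat.log 2 q : ℝ) ≤ ((L + 2) / s + Real.log s) / Real.log 2 := by
    rw [le_div_iff₀ hlog2]
    linarith
  have h7 : d0 / (s * Real.log 2) ≤ a / 2 := by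
    rw [div_le_div_iff₀ (by positivity) two_pos]
    have hle : 2 * d0 / (a * Real.log 2) ≤ s := by rw [hs]; linarith
    have e : (2 * d0 / (a * Real.log 2)) * (a * Real.log 2) = 2 * d0 :=
      div_mul_cancel₀ _ (ne_of_gt (by positivity))
    calc d0 * 2 = (2 * d0 / (a * Real.log 2)) * (a * Real.log 2) := by rw [e]; ring
      _ ≤ s * (a * Real.log 2) := mul_le_mul_of_nonneg_right hle (by positivity)
      _ = a * (s * Real.log 2) := by ring
  have h8 : d0 * (Nat.log 2 q : ℝ) ≤ d0 * (((L + 2) / s + Real.log s) / Real.log 2) :=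
    mul_le_mul_of_nonneg_left h6 hd
  have h9 : d0 * (((L + 2) / s + Real.log s) / Real.log 2)
      = (d0 / (s * Real.log 2)) * (L + 2) + d0 * (Real.log s / Real.log 2) := by
    field_simp
  have h10 : (d0 / (s * Real.log 2)) * (L + 2) ≤ (a / 2) * (L + 2) :=
    mul_le_mul_of_nonneg_right h7 (by linarith)
  have h11 : (a / 2) * (L + 2) ≤ a * L + 2 * a := by nlinarith
  rw [h9] at h8
  linarith

end Statement6Aux


/-- The projections `α^X` and `α^Y` of an `ε`-monotone
continuous `(k,c)`-quasigeodesic segment `α : [0,R] → X ⋈ Y` (with `R > 1/ε`)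
are `(4k, MεR)`-quasigeodesic segments, where `M` depends only on `X ⋈ Y`,
`k` and `c`. -/
theorem statement_6 {X Y : Type*} [MetricSpace X] [MetricSpace Y]
    (HX : HoroSpace X) (HY : HoroSpace Y) (P : HoroMetric HX HY)
    (k c : ℝ) (hk : 1 ≤ k) (hc : 0 ≤ c) :
    ∃ M : ℝ, 0 < M ∧ ∀ ε R : ℝ, 0 < ε → 1 / ε < R →
      ∀ α : ℝ → HoroProd HX HY,
        ContOnD P.d α (Icc 0 R) →
        IsQGOn P.d k c α (Icc 0 R) →
        EpsMonotoneOn (fun p : HoroProd HX HY => HX.height p.1.1) ε α 0 R →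
        IsQGOn (fun a b : X => dist a b) (4 * k) (M * ε * R)
            (fun t => (α t).1.1) (Icc 0 R) ∧
        IsQGOn (fun a b : Y => dist a b) (4 * k) (M * ε * R)
            (fun t => (α t).1.2) (Icc 0 R) := by
  classical
  have hk0 : (0:ℝ) < k := lt_of_lt_of_le one_pos hk
  have hδm : 0 ≤ max HX.δ HY.δ := le_trans HX.δ_nonneg (le_max_left _ _)
  obtain ⟨K, hK0, hKb⟩ := Statement6Aux.log_linear (2 * max HX.δ HY.δ) (3 / (4 * k))
    (by linarith) (by positivity)
  have hC0 := P.C_nonneg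
  refine ⟨7 * c + P.C + 2 * k + K + 4 * k, by nlinarith, ?_⟩
  intro ε R hε hR α hcont hqg hmono
  have hR0 : 0 < R := lt_trans (by positivity) hR
  have hεR : 1 < ε * R := by
    have h := (div_lt_iff₀ hε).mp hR
    linarith [h]
  set φ : ℝ → ℝ := fun s => HX.height (α s).1.1 with hφ
  have hφd : ∀ s, HX.height (α s).1.1 = φ s := fun s => rfl
  have hφY : ∀ s, HY.height (α s).1.2 = -(φ s) := by
    intro s
    have h := (α s).2
    rw [hφd s] at h
    linarith
  have hφcont : ContinuousOn φ (Icc 0 R) := by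
    rw [Metric.continuousOn_iff]
    intro b hb ε' hε'
    obtain ⟨η, hη, hclose⟩ := hcont b hb ε' hε'
    refine ⟨η, hη, fun a ha hab => ?_⟩
    have h1 := hclose a ha (by rwa [Real.dist_eq] at hab)
    have h2 := P.height_lip (α b) (α a)
    rw [hφd, hφd] at h2
    rw [Real.dist_eq]
    calc |φ a - φ b| = |φ b - φ a| := abs_sub_comm _ _
      _ ≤ P.d (α b) (α a) := h2
      _ < ε' := h1
  set B := k * (ε * R) + c with hB
  have hkεR : 0 ≤ k * (ε * R) := mul_nonneg hk0.le (by positivity)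
  have hB0 : 0 ≤ B := by rw [hB]; linarith
  have hband : ∀ t ∈ Icc (0:ℝ) R, ∀ u ∈ Icc (0:ℝ) R, t ≤ u → ∀ s ∈ Icc t u,
      min (φ t) (φ u) - 2 * B ≤ φ s ∧ φ s ≤ max (φ t) (φ u) + 2 * B := by
    intro t ht u hu htu s hs
    have hsub : Icc t u ⊆ Icc (0:ℝ) R := Icc_subset_Icc ht.1 hu.2
    have hsub1 : Icc t s ⊆ Icc (0:ℝ) R := Icc_subset_Icc ht.1 (hsub hs).2
    have hsub2 : Icc s u ⊆ Icc (0:ℝ) R := Icc_subset_Icc (hsub hs).1 hu.2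
    constructor
    · by_contra hcon
      push_neg at hcon
      set v := min (φ t) (φ u) - B with hv
      obtain ⟨s₁, hs₁mem, hs₁⟩ := intermediate_value_Icc' hs.1 (hφcont.mono hsub1)
        (⟨by linarith [min_le_left (φ t) (φ u)],
          by linarith [min_le_left (φ t) (φ u)]⟩ : v ∈ Icc (φ s) (φ t))
      obtain ⟨s₂, hs₂mem, hs₂⟩ := intermediate_value_Icc hs.2 (hφcont.mono hsub2)
        (⟨by linarith [min_le_right (φ t) (φ u)],
          by linarith [min_le_right (φ t) (φ u)]⟩ : v ∈ Icc (φ s) (φ u))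
      have hmono' := hmono s₁ (hsub1 hs₁mem) s₂ (hsub2 hs₂mem)
        (by dsimp only; rw [hφd, hφd, hs₁, hs₂])
      have h1 : s₁ ≤ s := hs₁mem.2
      have h2 : s ≤ s₂ := hs₂mem.1
      rw [abs_of_nonpos (by linarith), sub_zero] at hmono'
      have hss : |s - s₁| ≤ ε * R := by
        rw [abs_of_nonneg (by linarith)]
        linarith
      have hq := (hqg s (hsub hs) s₁ (hsub1 hs₁mem)).2
      have hlip := P.height_lip (α s) (α s₁)
      rw [hφd, hφd] at hlip
      have habs2 : φ s₁ - φ s ≤ |φ s - φ s₁| := by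
        rw [abs_sub_comm]; exact le_abs_self _
      have hkss : k * |s - s₁| ≤ k * (ε * R) := mul_le_mul_of_nonneg_left hss hk0.le
      have hfin : v - φ s ≤ B := by rw [← hs₁, hB]; linarith
      rw [hv] at hfin
      linarith
    · by_contra hcon
      push_neg at hcon
      set v := max (φ t) (φ u) + B with hv
      obtain ⟨s₁, hs₁mem, hs₁⟩ := intermediate_value_Icc hs.1 (hφcont.mono hsub1)
        (⟨by linarith [le_max_left (φ t) (φ u)],
          by linarith [le_max_left (φ t) (φ u)]⟩ : v ∈ Icc (φ t) (φ s))
      obtain ⟨s₂, hs₂mem, hs₂⟩ := intermediate_value_Icc' hs.2 (hφcont.mono hsub2)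
        (⟨by linarith [le_max_right (φ t) (φ u)],
          by linarith [le_max_right (φ t) (φ u)]⟩ : v ∈ Icc (φ u) (φ s))
      have hmono' := hmono s₁ (hsub1 hs₁mem) s₂ (hsub2 hs₂mem)
        (by dsimp only; rw [hφd, hφd, hs₁, hs₂])
      have h1 : s₁ ≤ s := hs₁mem.2
      have h2 : s ≤ s₂ := hs₂mem.1
      rw [abs_of_nonpos (by linarith), sub_zero] at hmono'
      have hss : |s - s₁| ≤ ε * R := by
        rw [abs_of_nonneg (by linarith)]
        linarith
      have hq := (hqg s (hsub hs) s₁ (hsub1 hs₁mem)).2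
      have hlip := P.height_lip (α s) (α s₁)
      rw [hφd, hφd] at hlip
      have habs2 : φ s - φ s₁ ≤ |φ s - φ s₁| := le_abs_self _
      have hkss : k * |s - s₁| ≤ k * (ε * R) := mul_le_mul_of_nonneg_left hss hk0.le
      have hfin : φ s - v ≤ B := by rw [← hs₁, hB]; linarith
      rw [hv] at hfin
      linarith
  have hmaxeq : ∀ t u : ℝ,
      (max (φ t) (φ u) - φ t) + (max (φ t) (φ u) - φ u) = |φ t - φ u| := by
    intro t u
    have h1 := max_add_min (φ t) (φ u)
    have h2 := max_sub_min_eq_abs (φ t) (φ u)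
    rw [abs_sub_comm] at h2
    linarith
  have hmineq : ∀ t u : ℝ,
      (φ t - min (φ t) (φ u)) + (φ u - min (φ t) (φ u)) = |φ t - φ u| := by
    intro t u
    have h1 := max_add_min (φ t) (φ u)
    have h2 := max_sub_min_eq_abs (φ t) (φ u)
    rw [abs_sub_comm] at h2
    linarith
  have key : ∀ t ∈ Icc (0:ℝ) R, ∀ u ∈ Icc (0:ℝ) R, t ≤ u →
      ((4 * k)⁻¹ * (u - t) - (7 * c + P.C + 2 * k + K + 4 * k) * ε * R
          ≤ dist (α t).1.1 (α u).1.1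
        ∧ dist (α t).1.1 (α u).1.1
          ≤ 4 * k * (u - t) + (7 * c + P.C + 2 * k + K + 4 * k) * ε * R)
      ∧ ((4 * k)⁻¹ * (u - t) - (7 * c + P.C + 2 * k + K + 4 * k) * ε * R
          ≤ dist (α t).1.2 (α u).1.2
        ∧ dist (α t).1.2 (α u).1.2
          ≤ 4 * k * (u - t) + (7 * c + P.C + 2 * k + K + 4 * k) * ε * R) := by
    intro t ht u hu htu
    have hsub : Icc t u ⊆ Icc (0:ℝ) R := Icc_subset_Icc ht.1 hu.2
    have habs : |t - u| = u - t := by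
      rw [abs_sub_comm]; exact abs_of_nonneg (by linarith)
    obtain ⟨hDlow, hDup⟩ := hqg t ht u hu
    rw [habs] at hDlow hDup
    have happrox := abs_le.mp (P.approx (α t) (α u))
    rw [hφd, hφd] at happrox
    have hdX0 : 0 ≤ dist (α t).1.1 (α u).1.1 := dist_nonneg
    have hdY0 : 0 ≤ dist (α t).1.2 (α u).1.2 := dist_nonneg
    have htwo := P.two_d_ge (α t) (α u)
    have hspeedX : ∀ s ∈ Icc t u, ∀ s' ∈ Icc t u,
        dist ((fun r => (α r).1.1) s) ((fun r => (α r).1.1) s')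
          ≤ 2 * k * |s - s'| + 2 * c := by
      intro s hs s' hs'
      have h1 := P.two_d_ge (α s) (α s')
      have h2 := (hqg s (hsub hs) s' (hsub hs')).2
      have h3 : (0:ℝ) ≤ dist (α s).1.2 (α s').1.2 := dist_nonneg
      dsimp only
      linarith
    have hspeedY : ∀ s ∈ Icc t u, ∀ s' ∈ Icc t u,
        dist ((fun r => (α r).1.2) s) ((fun r => (α r).1.2) s')
          ≤ 2 * k * |s - s'| + 2 * c := by
      intro s hs s' hs'
      have h1 := P.two_d_ge (α s) (α s')
      have h2 := (hqg s (hsub hs) s' (hsub hs')).2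
      have h3 : (0:ℝ) ≤ dist (α s).1.1 (α s').1.1 := dist_nonneg
      dsimp only
      linarith
    have hhtY : ∀ s ∈ Icc t u,
        HY.height ((fun r => (α r).1.2) s) ≤ -(min (φ t) (φ u) - 2 * B) := by
      intro s hs
      have h1 := (hband t ht u hu htu s hs).1
      dsimp only
      rw [hφY s]
      linarith
    have hhtX : ∀ s ∈ Icc t u,
        HX.height ((fun r => (α r).1.1) s) ≤ max (φ t) (φ u) + 2 * B := by
      intro s hs
      have h1 := (hband t ht u hu htu s hs).2
      dsimp only
      rw [hφd s]
      linarith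
    have hpbY := Statement6Aux.pathbound HY (fun r => (α r).1.2) t u k c
      (-(min (φ t) (φ u) - 2 * B)) htu hk hc hspeedY hhtY
    have hpbX := Statement6Aux.pathbound HX (fun r => (α r).1.1) t u k c
      (max (φ t) (φ u) + 2 * B) htu hk hc hspeedX hhtX
    rw [hφY t, hφY u] at hpbY
    rw [hφd t, hφd u] at hpbX
    have hlt0 : (0:ℝ) ≤ (Nat.log 2 (⌈u - t⌉₊ + 1) : ℝ) + 1 := by positivity
    have hδY : 2 * HY.δ * ((Nat.log 2 (⌈u - t⌉₊ + 1) : ℝ) + 1)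
        ≤ 2 * max HX.δ HY.δ * ((Nat.log 2 (⌈u - t⌉₊ + 1) : ℝ) + 1) :=
      mul_le_mul_of_nonneg_right (by linarith [le_max_right HX.δ HY.δ]) hlt0
    have hδX : 2 * HX.δ * ((Nat.log 2 (⌈u - t⌉₊ + 1) : ℝ) + 1)
        ≤ 2 * max HX.δ HY.δ * ((Nat.log 2 (⌈u - t⌉₊ + 1) : ℝ) + 1) :=
      mul_le_mul_of_nonneg_right (by linarith [le_max_left HX.δ HY.δ]) hlt0
    have hKu := hKb (u - t) (by linarith)
    have hinv : (4 * k)⁻¹ * (u - t) + 3 / (4 * k) * (u - t) = k⁻¹ * (u - t) := by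
      field_simp
      ring
    have hone : (7 * c + P.C + 2 * k + K) ≤ (7 * c + P.C + 2 * k + K) * (ε * R) :=
      le_mul_of_one_le_right (by linarith) hεR.le
    have hkut : 0 ≤ k * (u - t) := mul_nonneg hk0.le (by linarith)
    refine ⟨⟨?_, ?_⟩, ?_, ?_⟩
    · linarith [happrox.2, hpbY, hDlow, hδY, hKu, hmineq t u, hone, hB, hinv]
    · linarith [htwo, hDup, hdY0, hone, hkut, hεR, hkεR]
    · linarith [happrox.2, hpbX, hDlow, hδX, hKu, hmaxeq t u, hone, hB, hinv]
    · linarith [htwo, hDup, hdX0, hone, hkut, hεR, hkεR]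
  constructor
  · intro t ht u hu
    dsimp only
    rcases le_total t u with h | h
    · have hk1 := (key t ht u hu h).1
      have habs : |t - u| = u - t := by
        rw [abs_sub_comm]; exact abs_of_nonneg (by linarith)
      rw [habs]
      exact hk1
    · have hk1 := (key u hu t ht h).1
      have habs : |t - u| = t - u := abs_of_nonneg (by linarith)
      have hdc : dist (α t).1.1 (α u).1.1 = dist (α u).1.1 (α t).1.1 := dist_comm _ _
      rw [habs, hdc]
      exact hk1
  · intro t ht u hu
    dsimp only
    rcases le_total t u with h | h
    · have hk1 := (key t ht u hu h).2
      have habs : |t - u| = u - t := by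
        rw [abs_sub_comm]; exact abs_of_nonneg (by linarith)
      rw [habs]
      exact hk1
    · have hk1 := (key u hu t ht h).2
      have habs : |t - u| = t - u := abs_of_nonneg (by linarith)
      have hdc : dist (α t).1.2 (α u).1.2 = dist (α u).1.2 (α t).1.2 := dist_comm _ _
      rw [habs, hdc]
      exact hk1
end
end

section
/- Let X and Y be proper, geodesically complete, Gromov δ-hyperbolic, Busemann metric spaces, let ε > 0, R > 1/ε, and let α: [0,R] → X⋈Y be an ε-monotone continuous (k,c)-quasigeodesic segment. Then there exists a constant M depending only on k, c and δ such that for all t₁, t₂ ∈ [0,R]: (1/k)·|t₁−t₂| − M·ε·R ≤ |h(α(t₁)) − h(α(t₂))| ≤ k·|t₁−t₂| + M·ε·R; i.e. the height function along α is a quasi-isometric embedding of [0,R] into ℝ. -/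
open Set Filter MeasureTheory
open scoped ENNReal

noncomputable section

/-! ### Auxiliary lemmas -/

open Topology

lemma HoroSpace.dist_ray_sub_tendsto {X : Type*} [MetricSpace X] (H : HoroSpace X) (x : X) :
    Tendsto (fun t : ℝ => dist x (H.ray t) - t) atTop (𝓝 (- H.height x)) := by
  have hray : ∀ s s' : ℝ, 0 ≤ s → 0 ≤ s' → dist (H.ray s) (H.ray s') = |s - s'| :=
    fun s s' hs hs' => H.ray_geodesic s hs s' hs'
  set g : ℝ → ℝ := fun t => dist x (H.ray (max t 0)) - max t 0 with hg
  have hanti : Antitone g := by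
    intro t u htu
    have h0t : (0:ℝ) ≤ max t 0 := le_max_right _ _
    have h0u : (0:ℝ) ≤ max u 0 := le_max_right _ _
    have hle : max t 0 ≤ max u 0 := max_le_max htu le_rfl
    have htri := dist_triangle x (H.ray (max t 0)) (H.ray (max u 0))
    have hd : dist (H.ray (max t 0)) (H.ray (max u 0)) = max u 0 - max t 0 := by
      rw [hray _ _ h0t h0u, abs_sub_comm, abs_of_nonneg (by linarith)]
    simp only [hg]
    linarith
  have hbdd : BddBelow (Set.range g) := by
    refine ⟨- dist x (H.ray 0), ?_⟩
    rintro y ⟨t, rfl⟩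
    have h0t : (0:ℝ) ≤ max t 0 := le_max_right _ _
    have hd : dist (H.ray 0) (H.ray (max t 0)) = max t 0 := by
      rw [hray _ _ le_rfl h0t, abs_sub_comm, sub_zero, abs_of_nonneg h0t]
    have htri := dist_triangle (H.ray 0) x (H.ray (max t 0))
    have hxy : dist (H.ray 0) x = dist x (H.ray 0) := dist_comm _ _
    simp only [hg]
    linarith
  have htend : Tendsto g atTop (𝓝 (⨅ t, g t)) := tendsto_atTop_ciInf hanti hbdd
  have heq : g =ᶠ[atTop] (fun t : ℝ => dist x (H.ray t) - t) := by
    filter_upwards [eventually_ge_atTop (0:ℝ)] with t ht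
    simp only [hg, max_eq_left ht]
  have htend' : Tendsto (fun t : ℝ => dist x (H.ray t) - t) atTop (𝓝 (⨅ t, g t)) :=
    htend.congr' heq
  have hh : H.height x = - ⨅ t, g t := by
    rw [HoroSpace.height, htend'.limsup_eq]
  rw [hh, neg_neg]
  exact htend'

lemma HoroSpace.height_lip1 {X : Type*} [MetricSpace X] (H : HoroSpace X) (x y : X) :
    |H.height x - H.height y| ≤ dist x y := by
  have hx := H.dist_ray_sub_tendsto x
  have hy := H.dist_ray_sub_tendsto y
  have habs : Tendsto (fun t : ℝ => |(dist x (H.ray t) - t) - (dist y (H.ray t) - t)|) atTop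
      (𝓝 |- H.height x - - H.height y|) := (hx.sub hy).abs
  have hle : ∀ t : ℝ, |(dist x (H.ray t) - t) - (dist y (H.ray t) - t)| ≤ dist x y := by
    intro t
    have he : (dist x (H.ray t) - t) - (dist y (H.ray t) - t)
        = dist x (H.ray t) - dist y (H.ray t) := by ring
    rw [he]
    exact abs_dist_sub_le x y (H.ray t)
  have hfin := le_of_tendsto habs (Filter.Eventually.of_forall hle)
  have : - H.height x - - H.height y = -(H.height x - H.height y) := by ring
  rw [this, abs_neg] at hfin
  exact hfin

lemma HoroSpace.hyp_height {X : Type*} [MetricSpace X] (H : HoroSpace X) (p q r : X) :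
    dist p r + (- H.height q) ≤
      max (dist p q + (- H.height r)) (dist q r + (- H.height p)) + 2 * H.δ := by
  have hp := H.dist_ray_sub_tendsto p
  have hq := H.dist_ray_sub_tendsto q
  have hr := H.dist_ray_sub_tendsto r
  have hLHS : Tendsto (fun t : ℝ => dist p r + (dist q (H.ray t) - t)) atTop
      (𝓝 (dist p r + (- H.height q))) := tendsto_const_nhds.add hq
  have hRHS : Tendsto (fun t : ℝ =>
      max (dist p q + (dist r (H.ray t) - t)) (dist q r + (dist p (H.ray t) - t)) + 2 * H.δ)
      atTop
      (𝓝 (max (dist p q + (- H.height r)) (dist q r + (- H.height p)) + 2 * H.δ)) :=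
    ((tendsto_const_nhds.add hr).max (tendsto_const_nhds.add hp)).add tendsto_const_nhds
  refine le_of_tendsto_of_tendsto' hLHS hRHS ?_
  intro t
  have h4 := H.hyperbolic p r q (H.ray t)
  simp only at h4
  have hc : dist r q = dist q r := dist_comm r q
  rcases max_cases (dist p q + dist r (H.ray t)) (dist p (H.ray t) + dist r q) with
    ⟨hmx, _⟩ | ⟨hmx, _⟩ <;> rw [hmx] at h4
  · have hM := le_max_left (dist p q + (dist r (H.ray t) - t)) (dist q r + (dist p (H.ray t) - t))
    linarith
  · have hM := le_max_right (dist p q + (dist r (H.ray t) - t)) (dist q r + (dist p (H.ray t) - t))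
    linarith

lemma HoroSpace.slab_ultra {X : Type*} [MetricSpace X] (H : HoroSpace X) (x y z : X)
    (m W : ℝ) (hx : H.height x ∈ Icc m (m + W)) (hy : H.height y ∈ Icc m (m + W))
    (hz : H.height z ∈ Icc m (m + W)) :
    dist x z ≤ max (dist x y) (dist y z) + W + 2 * H.δ := by
  have h := H.hyp_height x y z
  obtain ⟨hx1, hx2⟩ := hx
  obtain ⟨hy1, hy2⟩ := hy
  obtain ⟨hz1, hz2⟩ := hz
  rcases max_cases (dist x y + - H.height z) (dist y z + - H.height x) with
    ⟨hmx, _⟩ | ⟨hmx, _⟩ <;> rw [hmx] at h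
  · have hM := le_max_left (dist x y) (dist y z)
    linarith
  · have hM := le_max_right (dist x y) (dist y z)
    linarith

lemma HoroSpace.chain_lemma {X : Type*} [MetricSpace X] (H : HoroSpace X) {δ' : ℝ}
    (hδ : H.δ ≤ δ') (hδ0 : 0 ≤ δ') (x : ℕ → X) (v : ℕ → ℝ) (E : ℝ) :
    ∀ n : ℕ, 1 ≤ n → (∀ j, j ≤ n → H.height (x j) = v j) →
      (∀ j, j + 1 ≤ n → 4 * δ' ≤ v (j+1) - v j) →
      (∀ j, j + 1 ≤ n → dist (x j) (x (j+1)) ≤ 2 * E) →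
      dist (x 0) (x n) - (v n - v 0) ≤ 2 * (E + δ') := by
  intro n
  induction n with
  | zero => intro h; exact absurd h (by norm_num)
  | succ n IH =>
    intro _ hv hgap hstep
    by_cases hn : n = 0
    · subst hn
      have hs := hstep 0 (by norm_num)
      have hg := hgap 0 (by norm_num)
      linarith
    · have hn1 : 1 ≤ n := Nat.one_le_iff_ne_zero.mpr hn
      have IH' := IH hn1 (fun j hj => hv j (hj.trans (Nat.le_succ n)))
        (fun j hj => hgap j (by omega)) (fun j hj => hstep j (by omega))
      have key := H.hyp_height (x 0) (x n) (x (n+1))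
      rw [hv 0 (by omega), hv n (by omega), hv (n+1) le_rfl] at key
      have hgn := hgap n le_rfl
      have hsn := hstep n le_rfl
      have hδδ := H.δ_nonneg
      rcases max_cases (dist (x 0) (x n) + - v (n+1)) (dist (x n) (x (n+1)) + - v 0) with
        ⟨hmx, _⟩ | ⟨hmx, _⟩ <;> rw [hmx] at key <;> linarith

lemma exists_affine_lt_two_pow (A B : ℝ) : ∃ n : ℕ, A + B * n < 2 ^ n := by
  obtain ⟨N, hN⟩ := exists_nat_gt (max A B)
  have hN2 : (max A B : ℝ) < 2 ^ N := by
    have h1 : (N : ℝ) < 2 ^ N := by exact_mod_cast (Nat.lt_two_pow_self (n := N))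
    linarith
  refine ⟨2 * N + 2, ?_⟩
  have hA : A < 2 ^ N := (le_max_left A B).trans_lt hN2
  have hB : B < 2 ^ N := (le_max_right A B).trans_lt hN2
  have hpow : (0:ℝ) < 2 ^ N := by positivity
  have hcast : ((2 * N + 2 : ℕ) : ℝ) = 2 * (N:ℝ) + 2 := by push_cast; ring
  have hN1 : (N : ℝ) + 1 ≤ 2 ^ N := by
    have := Nat.lt_two_pow_self (n := N)
    exact_mod_cast this
  have h2 : (2:ℝ) ^ N * (2 * (N:ℝ) + 3) ≤ 2 ^ (2 * N + 2) := by
    have hsplit : (2:ℝ) ^ (2 * N + 2) = 2 ^ N * 2 ^ (N + 2) := by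
      rw [← pow_add]; ring_nf
    rw [hsplit]
    have h3 : (2 * (N:ℝ) + 3) ≤ 2 ^ (N + 2) := by
      have : (2:ℝ) ^ (N + 2) = 4 * 2 ^ N := by rw [pow_add]; ring
      nlinarith
    nlinarith
  have h1 : A + B * ((2 * N + 2 : ℕ) : ℝ) < 2 ^ N * (2 * (N:ℝ) + 3) := by
    rw [hcast]
    nlinarith
  calc A + B * ((2 * N + 2 : ℕ) : ℝ) < 2 ^ N * (2 * (N:ℝ) + 3) := h1
    _ ≤ 2 ^ (2 * N + 2) := h2

lemma slab_length {X Y : Type*} [MetricSpace X] [MetricSpace Y]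
    (HX : HoroSpace X) (HY : HoroSpace Y) (P : HoroMetric HX HY)
    (k c : ℝ) (hk : 1 ≤ k) (hc : 0 ≤ c)
    {δ'' : ℝ} (hδX : HX.δ ≤ δ'') (hδY : HY.δ ≤ δ'') (hδ0 : 0 ≤ δ'')
    (R : ℝ) (α : ℝ → HoroProd HX HY)
    (hqg : IsQGOn P.d k c α (Icc 0 R))
    {n₀ : ℕ} (hn₀ : k * (4*k + 5*c + P.C) + (20 * k * δ'') * n₀ < 2 ^ n₀)
    (a b m : ℝ) (ha : a ∈ Icc 0 R) (hb : b ∈ Icc 0 R) (hab : a ≤ b)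
    (hband : ∀ t, a ≤ t → t ≤ b → HX.height ((α t).1.1) ∈ Icc m (m + 8 * δ'')) :
    b - a ≤ 2 ^ n₀ := by
  have hk0 : (0:ℝ) < k := lt_of_lt_of_le one_pos hk
  have hIcc : ∀ t : ℝ, a ≤ t → t ≤ b → t ∈ Icc 0 R :=
    fun t h1 h2 => ⟨ha.1.trans h1, h2.trans hb.2⟩
  have hYh : ∀ t : ℝ, HY.height ((α t).1.2) = - HX.height ((α t).1.1) := by
    intro t
    have := (α t).2
    linarith
  have hbandY : ∀ t, a ≤ t → t ≤ b →
      HY.height ((α t).1.2) ∈ Icc (-(m + 8 * δ'')) (-(m + 8 * δ'') + 8 * δ'') := by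
    intro t h1 h2
    obtain ⟨hb1, hb2⟩ := hband t h1 h2
    rw [hYh t]
    constructor <;> linarith
  have key : ∀ n : ℕ, ∀ a' b' : ℝ, a ≤ a' → b' ≤ b → a' ≤ b' → b' - a' ≤ 2 ^ n →
      dist ((α a').1.1) ((α b').1.1) ≤ 2*(k+c) + n * (10 * δ'') ∧
      dist ((α a').1.2) ((α b').1.2) ≤ 2*(k+c) + n * (10 * δ'') := by
    intro n
    induction n with
    | zero =>
      intro a' b' ha' hb' hab' hlen
      have ha'I : a' ∈ Icc 0 R := hIcc a' ha' (hab'.trans hb')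
      have hb'I : b' ∈ Icc 0 R := hIcc b' (ha'.trans hab') hb'
      have hd := (hqg a' ha'I b' hb'I).2
      have habs : |a' - b'| = b' - a' := by
        rw [abs_sub_comm, abs_of_nonneg (by linarith)]
      rw [habs] at hd
      norm_num at hlen ⊢
      have hd1 : P.d (α a') (α b') ≤ k + c := by nlinarith
      have hd2 := P.two_d_ge (α a') (α b')
      have hn1 := dist_nonneg (x := (α a').1.1) (y := (α b').1.1)
      have hn2 := dist_nonneg (x := (α a').1.2) (y := (α b').1.2)
      constructor <;> linarith
    | succ n IH =>
      intro a' b' ha' hb' hab' hlen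
      set m' := (a' + b') / 2 with hm'
      have hm1 : a' ≤ m' := by simp only [hm']; linarith
      have hm2 : m' ≤ b' := by simp only [hm']; linarith
      have hpow : (2:ℝ) ^ (n+1) = 2 ^ n * 2 := by rw [pow_succ]
      have hIH1 := IH a' m' ha' (hm2.trans hb') hm1 (by rw [hpow] at hlen; simp only [hm']; linarith)
      have hIH2 := IH m' b' (ha'.trans hm1) hb' hm2 (by rw [hpow] at hlen; simp only [hm']; linarith)
      have hXu := HX.slab_ultra ((α a').1.1) ((α m').1.1) ((α b').1.1) m (8*δ'')
        (hband a' ha' (hab'.trans hb')) (hband m' (ha'.trans hm1) (hm2.trans hb'))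
        (hband b' (ha'.trans hab') hb')
      have hYu := HY.slab_ultra ((α a').1.2) ((α m').1.2) ((α b').1.2) (-(m + 8*δ'')) (8*δ'')
        (hbandY a' ha' (hab'.trans hb')) (hbandY m' (ha'.trans hm1) (hm2.trans hb'))
        (hbandY b' (ha'.trans hab') hb')
      have hcast : ((n+1 : ℕ) : ℝ) = (n : ℝ) + 1 := by push_cast; ring
      constructor
      · rw [hcast]
        rcases max_cases (dist ((α a').1.1) ((α m').1.1)) (dist ((α m').1.1) ((α b').1.1)) with
          ⟨hmx, _⟩ | ⟨hmx, _⟩ <;> rw [hmx] at hXu <;>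
          [linarith [hIH1.1]; linarith [hIH2.1]]
      · rw [hcast]
        rcases max_cases (dist ((α a').1.2) ((α m').1.2)) (dist ((α m').1.2) ((α b').1.2)) with
          ⟨hmx, _⟩ | ⟨hmx, _⟩ <;> rw [hmx] at hYu <;>
          [linarith [hIH1.2]; linarith [hIH2.2]]
  by_contra hcon
  push_neg at hcon
  have hpow0 : (0:ℝ) < 2 ^ n₀ := by positivity
  set b₁ := a + 2 ^ n₀ with hb₁
  have hb₁b : b₁ ≤ b := by simp only [hb₁]; linarith
  have hb₁I : b₁ ∈ Icc 0 R := hIcc b₁ (by simp only [hb₁]; linarith) hb₁b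
  obtain ⟨hdX, hdY⟩ := key n₀ a b₁ le_rfl hb₁b (by simp only [hb₁]; linarith)
    (by simp only [hb₁]; linarith)
  have hql := (hqg a ha b₁ hb₁I).1
  have habs : |a - b₁| = 2 ^ n₀ := by
    rw [abs_sub_comm]
    simp only [hb₁, add_sub_cancel_left]
    exact abs_of_nonneg hpow0.le
  rw [habs] at hql
  have happ := P.approx (α a) (α b₁)
  have habsle := abs_le.mp happ
  have hDh := abs_nonneg (HX.height ((α a).1.1) - HX.height ((α b₁).1.1))
  have hdle : P.d (α a) (α b₁) ≤ dist ((α a).1.1) ((α b₁).1.1) + dist ((α a).1.2) ((α b₁).1.2)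
      + P.C := by linarith [habsle.2]
  have hstep : k⁻¹ * (2:ℝ) ^ n₀ ≤ 2*(2*(k+c) + n₀ * (10 * δ'')) + P.C + c := by linarith
  have hmul := mul_le_mul_of_nonneg_left hstep hk0.le
  rw [← mul_assoc, mul_inv_cancel₀ (ne_of_gt hk0), one_mul] at hmul
  nlinarith [hmul, hn₀]

set_option maxHeartbeats 1200000 in
lemma core_bound {X Y : Type*} [MetricSpace X] [MetricSpace Y]
    (HX : HoroSpace X) (HY : HoroSpace Y) (P : HoroMetric HX HY)
    (k c : ℝ) (hk : 1 ≤ k) (hc : 0 ≤ c)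
    {δ'' : ℝ} (hδX : HX.δ ≤ δ'') (hδY : HY.δ ≤ δ'') (hδ1 : 1 ≤ δ'')
    (ε R : ℝ) (hε : 0 < ε) (hεR : 1 < ε * R)
    (α : ℝ → HoroProd HX HY)
    (hcont : ContOnD P.d α (Icc 0 R))
    (hqg : IsQGOn P.d k c α (Icc 0 R))
    (hmono : EpsMonotoneOn (fun p : HoroProd HX HY => HX.height p.1.1) ε α 0 R)
    {n₀ : ℕ} (hn₀ : k * (4*k + 5*c + P.C) + (20 * k * δ'') * n₀ < 2 ^ n₀)
    (t₁ t₂ : ℝ) (ht₁ : t₁ ∈ Icc 0 R) (ht₂ : t₂ ∈ Icc 0 R) (h12 : t₁ ≤ t₂)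
    (hf12 : HX.height ((α t₁).1.1) ≤ HX.height ((α t₂).1.1)) :
    P.d (α t₁) (α t₂) ≤ (HX.height ((α t₂).1.1) - HX.height ((α t₁).1.1))
      + 6 * k * (ε * R) + (4 * k * 2 ^ n₀ + 6 * c + 4 * δ'' + P.C) := by
  have hδ0 : (0:ℝ) ≤ δ'' := by linarith
  have hk0 : (0:ℝ) < k := lt_of_lt_of_le one_pos hk
  have hεR0 : (0:ℝ) < ε * R := by linarith
  set f : ℝ → ℝ := fun t => HX.height ((α t).1.1) with hf
  have hfc : ContinuousOn f (Icc 0 R) := by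
    intro t ht
    rw [Metric.continuousWithinAt_iff]
    intro e he
    obtain ⟨η, hη, hcl⟩ := hcont t ht e he
    refine ⟨η, hη, fun u hu hdu => ?_⟩
    have h1 := P.height_lip (α t) (α u)
    have h2 := hcl u hu (by rwa [Real.dist_eq] at hdu)
    rw [Real.dist_eq, abs_sub_comm]
    exact lt_of_le_of_lt h1 h2
  have hmono' : ∀ w₁ w₂ : ℝ, w₁ ∈ Icc 0 R → w₂ ∈ Icc 0 R → f w₁ = f w₂ →
      |w₁ - w₂| ≤ ε * R := by
    intro w₁ w₂ h1 h2 he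
    have := hmono w₁ h1 w₂ h2 he
    rwa [sub_zero] at this
  have hsub : Icc t₁ t₂ ⊆ Icc 0 R := Icc_subset_Icc ht₁.1 ht₂.2
  have hfc' : ContinuousOn f (Icc t₁ t₂) := hfc.mono hsub
  set T₀ : ℝ := 2 ^ n₀ with hT₀
  have hT₀0 : (0:ℝ) < T₀ := by rw [hT₀]; positivity
  have hkT₀ : (0:ℝ) ≤ k * T₀ := by positivity
  have hkεR : (0:ℝ) ≤ k * (ε * R) := by positivity
  have hslab : ∀ a b m' : ℝ, a ∈ Icc 0 R → b ∈ Icc 0 R → a ≤ b →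
      (∀ t, a ≤ t → t ≤ b → f t ∈ Icc m' (m' + 8 * δ'')) → b - a ≤ T₀ :=
    fun a b m' ha hb hab hband =>
      slab_length HX HY P k c hk hc hδX hδY hδ0 R α hqg hn₀ a b m' ha hb hab hband
  set D : ℝ := f t₂ - f t₁ with hD
  have hD0 : 0 ≤ D := by rw [hD]; linarith [hf12]
  have habs12 : |t₁ - t₂| = t₂ - t₁ := by
    rw [abs_sub_comm, abs_of_nonneg (by linarith)]
  by_cases hDsmall : D < 4 * δ''
  · -- small height difference
    by_cases htt : t₂ - t₁ ≤ T₀ + 2 * (ε * R)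
    · have hd := (hqg t₁ ht₁ t₂ ht₂).2
      rw [habs12] at hd
      have hmul : k * (t₂ - t₁) ≤ k * (T₀ + 2 * (ε * R)) :=
        mul_le_mul_of_nonneg_left htt hk0.le
      have hexp : k * (T₀ + 2*(ε*R)) = k*T₀ + 2*(k*(ε*R)) := by ring
      have hCn := P.C_nonneg
      have hgoal : k * (t₂ - t₁) + c ≤ D + 6 * k * (ε * R) + (4 * k * T₀ + 6 * c + 4 * δ'' + P.C) := by
        nlinarith
      calc P.d (α t₁) (α t₂) ≤ k * (t₂ - t₁) + c := hd
        _ ≤ _ := hgoal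
    · exfalso
      push_neg at htt
      set a₀ := t₁ + ε * R with ha₀
      set b₀ := t₂ - ε * R with hb₀
      have hab₀ : a₀ ≤ b₀ := by rw [ha₀, hb₀]; linarith [hT₀0]
      have ha₀I : a₀ ∈ Icc 0 R := ⟨by rw [ha₀]; linarith [ht₁.1], by rw [ha₀]; nlinarith [ht₂.2] ⟩
      have hb₀I : b₀ ∈ Icc 0 R := ⟨by rw [hb₀]; nlinarith [ht₁.1], by rw [hb₀]; linarith [ht₂.2]⟩
      have hband : ∀ t, a₀ ≤ t → t ≤ b₀ → f t ∈ Icc (f t₁) (f t₁ + 8 * δ'') := by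
        intro t hta htb
        have htI : t ∈ Icc 0 R := ⟨ha₀I.1.trans hta, htb.trans hb₀I.2⟩
        constructor
        · by_contra hlt
          push_neg at hlt
          obtain ⟨w, hw, hfw⟩ := intermediate_value_Icc (show t ≤ t₂ by rw [hb₀] at htb; linarith)
            (hfc.mono (Icc_subset_Icc htI.1 ht₂.2)) ⟨hlt.le, hf12⟩
          have hwI : w ∈ Icc 0 R := ⟨htI.1.trans hw.1, hw.2.trans ht₂.2⟩
          have hww := hmono' w t₁ hwI ht₁ hfw
          have h1 : w - t₁ ≤ ε * R := (abs_le.mp hww).2.trans (by linarith) |>.trans_eq rfl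
          have hwt : w = t := by rw [ha₀] at hta; linarith [hw.1]
          rw [hwt] at hfw
          linarith
        · by_contra hgt
          push_neg at hgt
          have hft2 : f t₂ < f t := by rw [hD] at hDsmall; linarith
          obtain ⟨w, hw, hfw⟩ := intermediate_value_Icc (show t₁ ≤ t by rw [ha₀] at hta; linarith)
            (hfc.mono (Icc_subset_Icc ht₁.1 htI.2)) ⟨hf12, hft2.le⟩
          have hwI : w ∈ Icc 0 R := ⟨ht₁.1.trans hw.1, hw.2.trans htI.2⟩
          have hww := hmono' w t₂ hwI ht₂ hfw
          have h1 : t₂ - w ≤ ε * R := by linarith [(abs_le.mp hww).1]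
          have hwt : w = t := by rw [hb₀] at htb; linarith [hw.2]
          rw [hwt] at hfw
          linarith
      have hsl := hslab a₀ b₀ (f t₁) ha₀I hb₀I hab₀ hband
      rw [ha₀, hb₀] at hsl
      linarith
  · -- main case
    push_neg at hDsmall
    have hδ''0 : (0:ℝ) < δ'' := by linarith
    set n : ℕ := ⌊D / (4 * δ'')⌋₊ with hn
    have hn1 : 1 ≤ n := by
      apply Nat.le_floor
      rw [Nat.cast_one, le_div_iff₀ (by positivity)]
      linarith
    have hnR : (0:ℝ) < (n:ℝ) := by exact_mod_cast Nat.pos_of_ne_zero (by omega)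
    set g : ℝ := D / n with hg
    have hng : (n:ℝ) * g = D := by rw [hg]; field_simp
    have hgl : 4 * δ'' ≤ g := by
      have h1 : (n:ℝ) ≤ D / (4*δ'') := Nat.floor_le (by positivity)
      have h2 := (le_div_iff₀ (by positivity : (0:ℝ) < 4*δ'')).mp h1
      rw [hg, le_div_iff₀ hnR]
      linarith
    have hgu : g ≤ 8 * δ'' := by
      have h2 : D / (4*δ'') < (n:ℝ) + 1 := Nat.lt_floor_add_one _
      have h3 : (1:ℝ) ≤ (n:ℝ) := by exact_mod_cast hn1
      have h4 := (div_lt_iff₀ (by positivity : (0:ℝ) < 4*δ'')).mp h2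
      rw [hg, div_le_iff₀ hnR]
      nlinarith
    have hg0 : (0:ℝ) ≤ g := by linarith
    set v : ℕ → ℝ := fun j => f t₁ + (j:ℝ) * g with hv
    have hvdiff : ∀ j : ℕ, v (j+1) - v j = g := by
      intro j
      simp only [hv]
      push_cast
      ring
    have hv0 : v 0 = f t₁ := by simp [hv]
    have hvn : v n = f t₂ := by
      simp only [hv]
      rw [hng, hD]
      ring
    have hvmono : ∀ i j : ℕ, i ≤ j → v i ≤ v j := by
      intro i j hij
      simp only [hv]
      have hcast : (i:ℝ) ≤ (j:ℝ) := by exact_mod_cast hij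
      have := mul_le_mul_of_nonneg_right hcast hg0
      linarith
    set S : ℕ → Set ℝ := fun j => Icc t₁ t₂ ∩ f ⁻¹' {v j} with hS
    have hSclosed : ∀ j, IsClosed (S j) :=
      fun j => hfc'.preimage_isClosed_of_isClosed isClosed_Icc isClosed_singleton
    have hSbdd : ∀ j, BddAbove (S j) := fun j => bddAbove_Icc.mono inter_subset_left
    have hSne : ∀ j, j ≤ n → (S j).Nonempty := by
      intro j hj
      have hj0 : (0:ℝ) ≤ (j:ℝ) * g := by positivity
      have hjn : (j:ℝ) ≤ (n:ℝ) := by exact_mod_cast hj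
      have hjg : (j:ℝ) * g ≤ (n:ℝ) * g := mul_le_mul_of_nonneg_right hjn hg0
      have hvj : v j ∈ Icc (f t₁) (f t₂) := by
        constructor
        · simp only [hv]; linarith
        · simp only [hv]; rw [hng] at hjg; rw [hD] at hjg; linarith
      obtain ⟨w, hw, hfw⟩ := intermediate_value_Icc h12 hfc' hvj
      exact ⟨w, hw, by simp [hfw]⟩
    have hU : ∃ u : ℕ → ℝ, (∀ j, j ≤ n → (u j ∈ Icc t₁ t₂ ∧ f (u j) = v j)) ∧
        ∀ j, ∀ w ∈ S j, w ≤ u j := by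
      refine ⟨fun j => sSup (S j), fun j hj => ?_, fun j w hw => le_csSup (hSbdd j) hw⟩
      have hm := (hSclosed j).csSup_mem (hSne j hj) (hSbdd j)
      exact ⟨hm.1, by simpa using hm.2⟩
    obtain ⟨u, huP, humax⟩ := hU
    have huI : ∀ j, j ≤ n → u j ∈ Icc t₁ t₂ := fun j hj => (huP j hj).1
    have hufv : ∀ j, j ≤ n → f (u j) = v j := fun j hj => (huP j hj).2
    have humono : ∀ j, j + 1 ≤ n → u j ≤ u (j+1) := by
      intro j hj
      by_contra hlt
      push_neg at hlt
      have hj' : j ≤ n := by omega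
      have hvv : v (j+1) ∈ Icc (f (u j)) (f t₂) := by
        rw [hufv j hj', ← hvn]
        exact ⟨hvmono j (j+1) (by omega), hvmono (j+1) n hj⟩
      obtain ⟨w, hw, hfw⟩ := intermediate_value_Icc (huI j hj').2
        (hfc.mono (Icc_subset_Icc (ht₁.1.trans (huI j hj').1) ht₂.2)) hvv
      have hwS : w ∈ S (j+1) := ⟨⟨(huI j hj').1.trans hw.1, hw.2⟩, by simp [hfw]⟩
      have := humax (j+1) w hwS
      linarith [hw.1]
    have hgap : ∀ j, j + 1 ≤ n → u (j+1) - u j ≤ T₀ + ε * R := by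
      intro j hj
      have hj' : j ≤ n := by omega
      have hmj := humono j hj
      by_cases hcase : u (j+1) - ε * R ≤ u j
      · linarith
      · push_neg at hcase
        have hujI : u j ∈ Icc 0 R := hsub (huI j hj')
        have huj1I : u (j+1) ∈ Icc 0 R := hsub (huI (j+1) hj)
        have hband : ∀ t, u j ≤ t → t ≤ u (j+1) - ε * R → f t ∈ Icc (v j) (v j + 8 * δ'') := by
          intro t hta htb
          have htI : t ∈ Icc 0 R := ⟨hujI.1.trans hta, by linarith [huj1I.2]⟩
          constructor
          · by_contra hlt
            push_neg at hlt
            have hvj : v j ∈ Icc (f t) (f (u (j+1))) := by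
              rw [hufv (j+1) hj]
              exact ⟨hlt.le, hvmono j (j+1) (by omega)⟩
            obtain ⟨w, hw, hfw⟩ := intermediate_value_Icc (show t ≤ u (j+1) by linarith)
              (hfc.mono (Icc_subset_Icc htI.1 huj1I.2)) hvj
            have hwS : w ∈ S j :=
              ⟨⟨(huI j hj').1.trans (hta.trans hw.1), hw.2.trans (huI (j+1) hj).2⟩, by simp [hfw]⟩
            have hwle := humax j w hwS
            have hwt : w = t := le_antisymm (by linarith [hw.1]) hw.1
            rw [hwt] at hfw
            linarith
          · by_contra hgt
            push_neg at hgt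
            have hftv : v (j+1) < f t := by
              have := hvdiff j
              linarith
            have hvv2 : v (j+1) ∈ Icc (f (u j)) (f t) := by
              rw [hufv j hj']
              exact ⟨hvmono j (j+1) (by omega), hftv.le⟩
            obtain ⟨w, hw, hfw⟩ := intermediate_value_Icc hta
              (hfc.mono (Icc_subset_Icc hujI.1 htI.2)) hvv2
            have hwI : w ∈ Icc 0 R := ⟨hujI.1.trans hw.1, hw.2.trans htI.2⟩
            have hfweq : f w = f (u (j+1)) := by rw [hfw, hufv (j+1) hj]
            have hmm := hmono' w (u (j+1)) hwI huj1I hfweq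
            have h1 : u (j+1) - w ≤ ε * R := by linarith [(abs_le.mp hmm).1]
            have hwt : w = t := le_antisymm hw.2 (by linarith)
            rw [hwt] at hfw
            linarith
        have hb₀I : u (j+1) - ε * R ∈ Icc 0 R :=
          ⟨by linarith [hujI.1], by linarith [huj1I.2]⟩
        have hsl := hslab (u j) (u (j+1) - ε * R) (v j) hujI hb₀I hcase.le hband
        linarith
    set E : ℝ := k * (T₀ + ε * R) + c with hE
    have hstepd : ∀ j, j + 1 ≤ n → P.d (α (u j)) (α (u (j+1))) ≤ E := by
      intro j hj
      have h2 := (hqg (u j) (hsub (huI j (by omega))) (u (j+1)) (hsub (huI (j+1) hj))).2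
      have habs : |u j - u (j+1)| ≤ T₀ + ε * R := by
        rw [abs_sub_comm, abs_of_nonneg (by linarith [humono j hj])]
        exact hgap j hj
      calc P.d (α (u j)) (α (u (j+1))) ≤ k * |u j - u (j+1)| + c := h2
        _ ≤ E := by rw [hE]; nlinarith
    have hstepX : ∀ j, j + 1 ≤ n → dist ((α (u j)).1.1) ((α (u (j+1))).1.1) ≤ 2 * E := by
      intro j hj
      have h1 := P.two_d_ge (α (u j)) (α (u (j+1)))
      have h2 := dist_nonneg (x := (α (u j)).1.2) (y := (α (u (j+1))).1.2)
      have h3 := hstepd j hj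
      linarith
    have hstepY : ∀ j, j + 1 ≤ n → dist ((α (u j)).1.2) ((α (u (j+1))).1.2) ≤ 2 * E := by
      intro j hj
      have h1 := P.two_d_ge (α (u j)) (α (u (j+1)))
      have h2 := dist_nonneg (x := (α (u j)).1.1) (y := (α (u (j+1))).1.1)
      have h3 := hstepd j hj
      linarith
    have hchainX := HX.chain_lemma hδX hδ0 (fun j => (α (u j)).1.1) v E n hn1
      (fun j hj => hufv j hj)
      (fun j hj => by rw [hvdiff j]; exact hgl)
      (fun j hj => hstepX j hj)
    have hYh : ∀ t : ℝ, HY.height ((α t).1.2) = - HX.height ((α t).1.1) := by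
      intro t
      have := (α t).2
      linarith
    have hchainY := HY.chain_lemma hδY hδ0 (fun j => (α (u (n - j))).1.2)
      (fun j => -(v (n - j))) E n hn1
      (fun j hj => by
        show HY.height ((α (u (n - j))).1.2) = -(v (n - j))
        rw [hYh]
        exact congrArg Neg.neg (hufv (n - j) (by omega)))
      (fun j hj => by
        show 4 * δ'' ≤ -(v (n - (j+1))) - -(v (n - j))
        have hidx : n - j = (n - (j+1)) + 1 := by omega
        rw [hidx]
        have := hvdiff (n - (j+1))
        linarith)
      (fun j hj => by
        show dist ((α (u (n - j))).1.2) ((α (u (n - (j+1)))).1.2) ≤ 2 * E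
        have hidx : n - j = (n - (j+1)) + 1 := by omega
        rw [hidx, dist_comm]
        exact hstepY (n - (j+1)) (by omega))
    simp only [Nat.sub_zero, Nat.sub_self] at hchainY
    have happ := P.approx (α (u 0)) (α (u n))
    have hDh : |HX.height ((α (u 0)).1.1) - HX.height ((α (u n)).1.1)| = D := by
      have e0 : HX.height ((α (u 0)).1.1) = v 0 := hufv 0 (by omega)
      have en : HX.height ((α (u n)).1.1) = v n := hufv n le_rfl
      rw [e0, en, hv0, hvn, abs_sub_comm, ← hD, abs_of_nonneg hD0]
    have hd0n : P.d (α (u 0)) (α (u n)) ≤ D + 4 * (E + δ'') + P.C := by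
      have h1 := (abs_le.mp happ).2
      have hvd : v n - v 0 = D := by rw [hv0, hvn, hD]
      have hdc : dist ((α (u n)).1.2) ((α (u 0)).1.2) = dist ((α (u 0)).1.2) ((α (u n)).1.2) :=
        dist_comm _ _
      rw [hDh] at h1
      rw [hdc] at hchainY
      have hcx : dist ((α (u 0)).1.1) ((α (u n)).1.1) ≤ D + 2 * (E + δ'') := by
        have := hchainX
        linarith [hvd]
      have hcy : dist ((α (u 0)).1.2) ((α (u n)).1.2) ≤ D + 2 * (E + δ'') := by
        have := hchainY
        linarith [hvd]
      linarith
    have hu0I : u 0 ∈ Icc 0 R := hsub (huI 0 (by omega))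
    have hunI : u n ∈ Icc 0 R := hsub (huI n le_rfl)
    have hend1 : P.d (α t₁) (α (u 0)) ≤ k * (ε * R) + c := by
      have hfeq : f t₁ = f (u 0) := by rw [hufv 0 (by omega), hv0]
      have habs := hmono' t₁ (u 0) ht₁ hu0I hfeq
      have h2 := (hqg t₁ ht₁ (u 0) hu0I).2
      nlinarith
    have hend2 : P.d (α (u n)) (α t₂) ≤ k * (ε * R) + c := by
      have hfeq : f (u n) = f t₂ := by rw [hufv n le_rfl, hvn]
      have habs := hmono' (u n) t₂ hunI ht₂ hfeq
      have h2 := (hqg (u n) hunI t₂ ht₂).2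
      nlinarith
    have htri1 := P.d_triangle (α t₁) (α (u 0)) (α t₂)
    have htri2 := P.d_triangle (α (u 0)) (α (u n)) (α t₂)
    have hEexp : 4 * (E + δ'') = 4*(k*T₀) + 4*(k*(ε*R)) + 4*c + 4*δ'' := by rw [hE]; ring
    have hfin : P.d (α t₁) (α t₂) ≤ D + 6 * (k * (ε*R)) + (4*(k*T₀) + 6*c + 4*δ'' + P.C) := by
      linarith
    calc P.d (α t₁) (α t₂) ≤ D + 6 * (k * (ε*R)) + (4*(k*T₀) + 6*c + 4*δ'' + P.C) := hfin
      _ = (HX.height ((α t₂).1.1) - HX.height ((α t₁).1.1))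
          + 6 * k * (ε * R) + (4 * k * T₀ + 6 * c + 4 * δ'' + P.C) := by rw [hD]; ring

lemma d_bound_all {X Y : Type*} [MetricSpace X] [MetricSpace Y]
    (HX : HoroSpace X) (HY : HoroSpace Y) (P : HoroMetric HX HY)
    (k c : ℝ) (hk : 1 ≤ k) (hc : 0 ≤ c)
    {δ'' : ℝ} (hδX : HX.δ ≤ δ'') (hδY : HY.δ ≤ δ'') (hδ1 : 1 ≤ δ'')
    (ε R : ℝ) (hε : 0 < ε) (hεR : 1 < ε * R)
    (α : ℝ → HoroProd HX HY)
    (hcont : ContOnD P.d α (Icc 0 R))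
    (hqg : IsQGOn P.d k c α (Icc 0 R))
    (hmono : EpsMonotoneOn (fun p : HoroProd HX HY => HX.height p.1.1) ε α 0 R)
    {n₀ : ℕ} (hn₀ : k * (4*k + 5*c + P.C) + (20 * k * δ'') * n₀ < 2 ^ n₀)
    (t₁ t₂ : ℝ) (ht₁ : t₁ ∈ Icc 0 R) (ht₂ : t₂ ∈ Icc 0 R) :
    P.d (α t₁) (α t₂) ≤ |HX.height ((α t₁).1.1) - HX.height ((α t₂).1.1)|
      + 6 * k * (ε * R) + (4 * k * 2 ^ n₀ + 6 * c + 4 * δ'' + P.C) := by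
  -- first reduce to the case t₁ ≤ t₂
  have main : ∀ s₁ s₂ : ℝ, s₁ ∈ Icc 0 R → s₂ ∈ Icc 0 R → s₁ ≤ s₂ →
      P.d (α s₁) (α s₂) ≤ |HX.height ((α s₁).1.1) - HX.height ((α s₂).1.1)|
        + 6 * k * (ε * R) + (4 * k * 2 ^ n₀ + 6 * c + 4 * δ'' + P.C) := by
    intro s₁ s₂ hs₁ hs₂ hle
    by_cases hford : HX.height ((α s₁).1.1) ≤ HX.height ((α s₂).1.1)
    · have h := core_bound HX HY P k c hk hc hδX hδY hδ1 ε R hε hεR α hcont hqg hmono hn₀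
        s₁ s₂ hs₁ hs₂ hle hford
      have habs : |HX.height ((α s₁).1.1) - HX.height ((α s₂).1.1)|
          = HX.height ((α s₂).1.1) - HX.height ((α s₁).1.1) := by
        rw [abs_sub_comm, abs_of_nonneg (by linarith)]
      rw [habs]
      exact h
    · push_neg at hford
      have hR0 : (0:ℝ) ≤ R := hs₁.1.trans hs₁.2
      have hrevmem : ∀ s : ℝ, s ∈ Icc 0 R → R - s ∈ Icc 0 R :=
        fun s hs => ⟨by linarith [hs.2], by linarith [hs.1]⟩
      set β : ℝ → HoroProd HX HY := fun t => α (R - t) with hβ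
      have hcontβ : ContOnD P.d β (Icc 0 R) := by
        intro t ht e he
        obtain ⟨η, hη, hcl⟩ := hcont (R - t) (hrevmem t ht) e he
        exact ⟨η, hη, fun w hw hwd => hcl (R - w) (hrevmem w hw)
          (by rw [show R - w - (R - t) = -(w - t) by ring, abs_neg]; exact hwd)⟩
      have hqgβ : IsQGOn P.d k c β (Icc 0 R) := by
        intro t ht w hw
        have := hqg (R - t) (hrevmem t ht) (R - w) (hrevmem w hw)
        rwa [show R - t - (R - w) = -(t - w) by ring, abs_neg] at this
      have hmonoβ : EpsMonotoneOn (fun p : HoroProd HX HY => HX.height p.1.1) ε β 0 R := by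
        intro w₁ h1 w₂ h2 he
        have := hmono (R - w₁) (hrevmem w₁ h1) (R - w₂) (hrevmem w₂ h2) he
        rwa [show R - w₁ - (R - w₂) = -(w₁ - w₂) by ring, abs_neg] at this
      have e₂ : β (R - s₂) = α s₂ := by rw [hβ]; simp
      have e₁ : β (R - s₁) = α s₁ := by rw [hβ]; simp
      have h := core_bound HX HY P k c hk hc hδX hδY hδ1 ε R hε hεR β hcontβ hqgβ hmonoβ hn₀
        (R - s₂) (R - s₁) (hrevmem s₂ hs₂) (hrevmem s₁ hs₁) (by linarith)
        (by rw [e₂, e₁]; exact hford.le)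
      rw [e₂, e₁] at h
      have habs : |HX.height ((α s₁).1.1) - HX.height ((α s₂).1.1)|
          = HX.height ((α s₁).1.1) - HX.height ((α s₂).1.1) := abs_of_nonneg (by linarith)
      rw [habs]
      rw [P.d_comm (α s₂) (α s₁)] at h
      linarith
  rcases le_total t₁ t₂ with h | h
  · exact main t₁ t₂ ht₁ ht₂ h
  · have := main t₂ t₁ ht₂ ht₁ h
    rw [P.d_comm (α t₂) (α t₁), abs_sub_comm] at this
    exact this
/-- Along an `ε`-monotone continuous `(k,c)`-quasigeodesic
segment `α : [0,R] → X ⋈ Y` (with `R > 1/ε`), the height function is a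
quasi-isometric embedding of `[0,R]` into `ℝ`:
`(1/k)|t₁−t₂| − MεR ≤ |h(α t₁) − h(α t₂)| ≤ k|t₁−t₂| + MεR`,
with `M` depending only on `k`, `c` and `δ`. -/
theorem statement_8 {X Y : Type*} [MetricSpace X] [MetricSpace Y]
    (HX : HoroSpace X) (HY : HoroSpace Y) (P : HoroMetric HX HY)
    (k c : ℝ) (hk : 1 ≤ k) (hc : 0 ≤ c) :
    ∃ M : ℝ, 0 < M ∧ ∀ ε R : ℝ, 0 < ε → 1 / ε < R →
      ∀ α : ℝ → HoroProd HX HY,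
        ContOnD P.d α (Icc 0 R) →
        IsQGOn P.d k c α (Icc 0 R) →
        EpsMonotoneOn (fun p : HoroProd HX HY => HX.height p.1.1) ε α 0 R →
        ∀ t₁ ∈ Icc (0 : ℝ) R, ∀ t₂ ∈ Icc (0 : ℝ) R,
          k⁻¹ * |t₁ - t₂| - M * ε * R ≤
              |HX.height ((α t₁).1.1) - HX.height ((α t₂).1.1)| ∧
          |HX.height ((α t₁).1.1) - HX.height ((α t₂).1.1)| ≤
              k * |t₁ - t₂| + M * ε * R := by
  have hk0 : (0:ℝ) < k := lt_of_lt_of_le one_pos hk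
  set δ'' : ℝ := max (max HX.δ HY.δ) 1 with hδ''def
  have hδX : HX.δ ≤ δ'' := le_max_of_le_left (le_max_left _ _)
  have hδY : HY.δ ≤ δ'' := le_max_of_le_left (le_max_right _ _)
  have hδ1 : (1:ℝ) ≤ δ'' := le_max_right _ _
  have hδ0 : (0:ℝ) ≤ δ'' := by linarith
  obtain ⟨n₀, hn₀⟩ := exists_affine_lt_two_pow (k * (4*k + 5*c + P.C)) (20 * k * δ'')
  have hT₀0 : (0:ℝ) < 2 ^ n₀ := by positivity
  have hK0 : (0:ℝ) ≤ 4 * k * 2 ^ n₀ + 6 * c + 4 * δ'' + P.C := by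
    have := P.C_nonneg
    nlinarith
  refine ⟨6 * k + (4 * k * 2 ^ n₀ + 6 * c + 4 * δ'' + P.C) + c + 1, by nlinarith, ?_⟩
  intro ε R hε hR α hcont hqg hmono t₁ ht₁ t₂ ht₂
  have hεR : 1 < ε * R := by
    rw [div_lt_iff₀ hε] at hR
    nlinarith
  have hwrap := d_bound_all HX HY P k c hk hc hδX hδY hδ1 ε R hε hεR α hcont hqg hmono hn₀
    t₁ t₂ ht₁ ht₂
  have hlow := (hqg t₁ ht₁ t₂ ht₂).1
  have hup := (hqg t₁ ht₁ t₂ ht₂).2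
  have hhl := P.height_lip (α t₁) (α t₂)
  have habsorb : (4 * k * 2 ^ n₀ + 6 * c + 4 * δ'' + P.C) + c + 1
      ≤ ((4 * k * 2 ^ n₀ + 6 * c + 4 * δ'' + P.C) + c + 1) * (ε * R) :=
    le_mul_of_one_le_right (by linarith) hεR.le
  have h6 : (0:ℝ) ≤ 6 * k * (ε * R) := by nlinarith
  have hM : (6 * k + (4 * k * 2 ^ n₀ + 6 * c + 4 * δ'' + P.C) + c + 1) * ε * R
      = 6 * k * (ε * R) + ((4 * k * 2 ^ n₀ + 6 * c + 4 * δ'' + P.C) + c + 1) * (ε * R) := by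
    ring
  constructor
  · linarith
  · linarith
end
end

section
/- Let X and Y be proper, geodesically complete, Gromov δ-hyperbolic, Busemann metric spaces and let k ≥ 1, c ≥ 0, ε > 0. There exist a constant M depending only on k, c, X⋈Y and ε, and a constant c₀ > 0 depending only on k, c and X⋈Y, such that for all r ≥ M, all integers N ≥ M, and every continuous (k,c)-quasigeodesic segment α: [0,r] → X⋈Y that is not ε-monotone, one has Σ_{j=0}^{N−1} |h(α(jr/N)) − h(α((j+1)r/N))| − |h(α(0)) − h(α(r))| ≥ c₀·ε·r. -/
open Set Filter MeasureTheory
open scoped ENNReal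

noncomputable section

section Helpers

variable {Z : Type*} [MetricSpace Z]

lemma HoroSpace.ray_dist (H : HoroSpace Z) {s t : ℝ} (hs : 0 ≤ s) (ht : 0 ≤ t) :
    dist (H.ray s) (H.ray t) = |s - t| :=
  H.ray_geodesic s hs t ht

lemma HoroSpace.tendsto_height (H : HoroSpace Z) (x : Z) :
    Filter.Tendsto (fun t : ℝ => t - dist x (H.ray t)) Filter.atTop (nhds (H.height x)) := by
  set f : ℝ → ℝ := fun t => t - dist x (H.ray t) with hf
  have mono : ∀ a b : ℝ, 0 ≤ a → a ≤ b → f a ≤ f b := by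
    intro a b ha hab
    have h1 : dist x (H.ray b) ≤ dist x (H.ray a) + dist (H.ray a) (H.ray b) :=
      dist_triangle _ _ _
    have h2 : dist (H.ray a) (H.ray b) = |a - b| := H.ray_dist ha (ha.trans hab)
    have h3 : |a - b| = b - a := by rw [abs_sub_comm]; exact abs_of_nonneg (by linarith)
    rw [h3] at h2
    simp only [hf]
    linarith
  have bdd : ∀ a : ℝ, 0 ≤ a → f a ≤ dist x (H.ray 0) := by
    intro a ha
    have h1 : dist (H.ray 0) (H.ray a) ≤ dist (H.ray 0) x + dist x (H.ray a) :=
      dist_triangle _ _ _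
    have h2 : dist (H.ray 0) (H.ray a) = a := by
      rw [H.ray_dist le_rfl ha, abs_sub_comm, sub_zero, abs_of_nonneg ha]
    have h3 : dist (H.ray 0) x = dist x (H.ray 0) := dist_comm _ _
    simp only [hf]
    linarith
  set g : ℝ → ℝ := fun t => f (max t 0) with hg
  have gmono : Monotone g := fun a b hab =>
    mono _ _ (le_max_right a 0) (max_le_max hab le_rfl)
  have gbdd : BddAbove (Set.range g) := by
    refine ⟨dist x (H.ray 0), ?_⟩
    rintro y ⟨t, rfl⟩
    exact bdd _ (le_max_right t 0)
  have hgt : Filter.Tendsto g Filter.atTop (nhds (⨆ t, g t)) := tendsto_atTop_ciSup gmono gbdd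
  have heq : g =ᶠ[Filter.atTop] f := by
    filter_upwards [Filter.eventually_ge_atTop (0 : ℝ)] with t ht
    simp [hg, max_eq_left ht]
  have hft : Filter.Tendsto f Filter.atTop (nhds (⨆ t, g t)) := hgt.congr' heq
  have hh : H.height x = ⨆ t, g t := by
    have hneg : Filter.Tendsto (fun t => dist x (H.ray t) - t) Filter.atTop
        (nhds (-(⨆ t, g t))) := by
      have := hft.neg
      simpa [hf, neg_sub] using this
    simp only [HoroSpace.height, hneg.limsup_eq, neg_neg]
  rw [hh]; exact hft

lemma HoroSpace.gromov_max (H : HoroSpace Z) (x y w : Z) :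
    H.height x + H.height y + dist x y ≤
      max (H.height x + H.height w + dist x w) (H.height w + H.height y + dist w y)
        + 2 * H.δ := by
  have key : ∀ t : ℝ,
      (t - dist x (H.ray t)) + (t - dist y (H.ray t)) + dist x y ≤
        max ((t - dist x (H.ray t)) + (t - dist w (H.ray t)) + dist x w)
          ((t - dist w (H.ray t)) + (t - dist y (H.ray t)) + dist w y) + 2 * H.δ := by
    intro t
    have h4 := H.hyperbolic x y w (H.ray t)
    set u := H.ray t with hu
    have hB : (t - dist x u) + (t - dist w u) + dist x w
        = (dist x w + dist y u) + (2*t - dist x u - dist y u - dist w u) := by ring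
    have hC : (t - dist w u) + (t - dist y u) + dist w y
        = (dist x u + dist y w) + (2*t - dist x u - dist y u - dist w u) := by
      rw [dist_comm w y]; ring
    have hL : (t - dist x u) + (t - dist y u) + dist x y
        = (dist x y + dist w u) + (2*t - dist x u - dist y u - dist w u) := by ring
    rw [hB, hC, hL, max_add_add_right]
    simp only [hu] at h4 ⊢
    linarith [h4]
  have l1 := H.tendsto_height x
  have l2 := H.tendsto_height y
  have l3 := H.tendsto_height w
  have LHS : Filter.Tendsto
      (fun t => (t - dist x (H.ray t)) + (t - dist y (H.ray t)) + dist x y) Filter.atTop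
      (nhds (H.height x + H.height y + dist x y)) := (l1.add l2).add_const _
  have R1 : Filter.Tendsto
      (fun t => (t - dist x (H.ray t)) + (t - dist w (H.ray t)) + dist x w) Filter.atTop
      (nhds (H.height x + H.height w + dist x w)) := (l1.add l3).add_const _
  have R2 : Filter.Tendsto
      (fun t => (t - dist w (H.ray t)) + (t - dist y (H.ray t)) + dist w y) Filter.atTop
      (nhds (H.height w + H.height y + dist w y)) := (l3.add l2).add_const _
  exact le_of_tendsto_of_tendsto' LHS ((R1.max R2).add_const (2 * H.δ)) key

lemma HoroSpace.chain_bound (H : HoroSpace Z) :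
    ∀ (m n : ℕ), 1 ≤ n → n ≤ 2 ^ m → ∀ (w : ℕ → Z) (S : ℝ),
      (∀ i < n, H.height (w i) + H.height (w (i + 1)) + dist (w i) (w (i + 1)) ≤ S) →
      H.height (w 0) + H.height (w n) + dist (w 0) (w n) ≤ S + 2 * H.δ * m := by
  intro m
  induction m with
  | zero =>
    intro n h1 h2 w S hS
    have hn : n = 1 := le_antisymm (by simpa using h2) h1
    subst hn
    have := hS 0 (by norm_num)
    push_cast
    linarith
  | succ m ih =>
    intro n h1 h2 w S hS
    have hδ : 0 ≤ H.δ := H.δ_nonneg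
    by_cases hn : n ≤ 2 ^ m
    · have := ih n h1 hn w S hS
      push_cast
      push_cast at this
      linarith
    · push_neg at hn
      set p := 2 ^ m with hp
      have hpow : 2 ^ (m + 1) = 2 * p := by rw [hp, pow_succ]; ring
      rw [hpow] at h2
      have hp1 : 1 ≤ p := Nat.one_le_two_pow
      have h₁ := ih p hp1 le_rfl w S (fun i hi => hS i (lt_trans hi hn))
      have h₂ := ih (n - p) (by omega) (by omega) (fun i => w (p + i)) S
        (fun i hi => by
          have := hS (p + i) (by omega)
          simpa [Nat.add_assoc] using this)
      have hpn : p + (n - p) = n := by omega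
      simp only [hpn] at h₂
      have tri := H.gromov_max (w 0) (w n) (w p)
      have hmax : max (H.height (w 0) + H.height (w p) + dist (w 0) (w p))
          (H.height (w p) + H.height (w n) + dist (w p) (w n)) ≤ S + 2 * H.δ * m :=
        max_le h₁ h₂
      push_cast
      linarith

lemma log_sublinear {b : ℝ} (hb : 0 < b) :
    ∃ M : ℝ, 1 ≤ M ∧ ∀ r : ℝ, M ≤ r → Real.log (r + 1) ≤ b * r := by
  refine ⟨max 1 (max (16 / b ^ 2) (2 / b)), le_max_left _ _, ?_⟩
  intro r hr
  have hr1 : (1 : ℝ) ≤ r := le_trans (le_max_left _ _) hr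
  have h16 : 16 / b ^ 2 ≤ r := le_trans (le_trans (le_max_left _ _) (le_max_right _ _)) hr
  have h2b : 2 / b ≤ r := le_trans (le_trans (le_max_right _ _) (le_max_right _ _)) hr
  have hrpos : (0 : ℝ) < r := lt_of_lt_of_le one_pos hr1
  have hlog2r : Real.log (r + 1) ≤ Real.log (2 * r) :=
    Real.log_le_log (by linarith) (by linarith)
  have hmul : Real.log (2 * r) = Real.log 2 + Real.log r :=
    Real.log_mul (by norm_num) (ne_of_gt hrpos)
  have hlog2 : Real.log 2 ≤ 1 := by
    have := Real.log_le_sub_one_of_pos (by norm_num : (0:ℝ) < 2)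
    linarith
  have hsqpos : 0 < Real.sqrt r := Real.sqrt_pos.mpr hrpos
  have hsq : Real.log r ≤ 2 * Real.sqrt r := by
    have h1 : Real.log (Real.sqrt r) ≤ Real.sqrt r - 1 :=
      Real.log_le_sub_one_of_pos hsqpos
    have h2 : Real.log (Real.sqrt r) = Real.log r / 2 := Real.log_sqrt hrpos.le
    linarith
  have h4b : 4 / b ≤ Real.sqrt r := by
    rw [Real.le_sqrt (by positivity) hrpos.le]
    calc (4 / b) ^ 2 = 16 / b ^ 2 := by field_simp; ring
      _ ≤ r := h16
  have hss : Real.sqrt r * Real.sqrt r = r := Real.mul_self_sqrt hrpos.le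
  have hb4 : 4 ≤ b * Real.sqrt r := by
    have := mul_le_mul_of_nonneg_left h4b hb.le
    rwa [mul_div_cancel₀ 4 (ne_of_gt hb)] at this
  have hs : 2 * Real.sqrt r ≤ (b / 2) * r := by
    have h9 : 0 ≤ (b * Real.sqrt r - 4) * Real.sqrt r :=
      mul_nonneg (by linarith) hsqpos.le
    have h10 : (b * Real.sqrt r - 4) * Real.sqrt r = b * r - 4 * Real.sqrt r := by
      rw [sub_mul, mul_assoc, hss]
    linarith
  have h1b : (1 : ℝ) ≤ (b / 2) * r := by
    have h11 : (b / 2) * (2 / b) ≤ (b / 2) * r :=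
      mul_le_mul_of_nonneg_left h2b (by positivity)
    have h12 : (b / 2) * (2 / b) = 1 := by field_simp
    linarith
  linarith

lemma abs_telescope (g : ℕ → ℝ) :
    ∀ a b : ℕ, a ≤ b → |g a - g b| ≤ ∑ j ∈ Finset.Ico a b, |g j - g (j + 1)| := by
  intro a b hab
  induction b, hab using Nat.le_induction with
  | base => simp
  | succ b hab ih =>
    rw [Finset.sum_Ico_succ_top hab]
    have h1 : |g a - g (b + 1)| ≤ |g a - g b| + |g b - g (b + 1)| := abs_sub_le _ _ _
    linarith

lemma five_chain (w0 a0 a1 a2 a3 wN z A B η : ℝ)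
    (h0 : |a0 - z| ≤ η) (h3 : |a3 - z| ≤ η)
    (h1 : |a1 - (z + A)| ≤ η) (h2 : |a2 - (z - B)| ≤ η) :
    |w0 - wN| + (2 * A + 2 * B - 8 * η) ≤
      |w0 - a0| + |a0 - a1| + |a1 - a2| + |a2 - a3| + |a3 - wN| := by
  have h0' := abs_le.mp h0
  have h3' := abs_le.mp h3
  have h1' := abs_le.mp h1
  have h2' := abs_le.mp h2
  have t1 : |w0 - wN| ≤ |w0 - a0| + |a0 - a3| + |a3 - wN| := by
    calc |w0 - wN| ≤ |w0 - a3| + |a3 - wN| := abs_sub_le _ _ _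
      _ ≤ (|w0 - a0| + |a0 - a3|) + |a3 - wN| := by
          linarith [abs_sub_le w0 a0 a3]
  have b1 : a1 - a0 ≤ |a0 - a1| := by rw [abs_sub_comm]; exact le_abs_self _
  have b2 : a1 - a2 ≤ |a1 - a2| := le_abs_self _
  have b3 : a3 - a2 ≤ |a2 - a3| := by rw [abs_sub_comm]; exact le_abs_self _
  have b4 : |a0 - a3| ≤ 2 * η := by
    have := abs_sub_le a0 z a3
    have hz3 : |z - a3| = |a3 - z| := abs_sub_comm _ _
    linarith
  linarith

end Helpers
set_option maxHeartbeats 1200000 in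
/-- A continuous `(k,c)`-quasigeodesic segment
`α : [0,r] → X ⋈ Y` which is not `ε`-monotone accumulates an extra `c₀·ε·r` of
height variation along any subdivision into `N` equal pieces, for `r, N` large
enough (`≥ M`, with `M` depending only on `k,c,X⋈Y,ε` and `c₀` only on
`k,c,X⋈Y`). -/
theorem statement_9 {X Y : Type*} [MetricSpace X] [MetricSpace Y]
    (HX : HoroSpace X) (HY : HoroSpace Y) (P : HoroMetric HX HY)
    (k c : ℝ) (hk : 1 ≤ k) (hc : 0 ≤ c) :
    ∃ c₀ : ℝ, 0 < c₀ ∧ ∀ ε : ℝ, 0 < ε → ∃ M : ℝ, 0 < M ∧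
      ∀ r : ℝ, M ≤ r → ∀ N : ℕ, M ≤ (N : ℝ) →
        ∀ α : ℝ → HoroProd HX HY,
          ContOnD P.d α (Icc 0 r) →
          IsQGOn P.d k c α (Icc 0 r) →
          ¬ EpsMonotoneOn (fun p : HoroProd HX HY => HX.height p.1.1) ε α 0 r →
          c₀ * ε * r ≤
            (∑ j ∈ Finset.range N,
                |HX.height ((α ((j : ℝ) * r / (N : ℝ))).1.1) -
                  HX.height ((α (((j : ℝ) + 1) * r / (N : ℝ))).1.1)|) -
              |HX.height ((α 0).1.1) - HX.height ((α r).1.1)| := by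
  have hk0 : (0 : ℝ) < k := lt_of_lt_of_le one_pos hk
  set Δ : ℝ := HX.δ + HY.δ with hΔdef
  have hΔ0 : 0 ≤ Δ := add_nonneg HX.δ_nonneg HY.δ_nonneg
  refine ⟨1 / (2 * k), by positivity, ?_⟩
  intro ε hε
  set q : ℝ := 2 * Δ / Real.log 2 with hqdef
  have hlog2pos : (0 : ℝ) < Real.log 2 := Real.log_pos (by norm_num)
  have hq0 : 0 ≤ q := div_nonneg (by linarith) hlog2pos.le
  set b : ℝ := (ε / (6 * k)) / (q + 1) with hbdef
  have hbpos : 0 < b := div_pos (by positivity) (by linarith)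
  obtain ⟨M₂, hM₂1, hM₂⟩ := log_sublinear hbpos
  set K₀ : ℝ := 13 * c + P.C + 4 * k + 2 * Δ with hK₀def
  have hK₀0 : 0 ≤ K₀ := by
    have := P.C_nonneg
    simp only [hK₀def]; linarith
  set Ma : ℝ := 6 * k * (K₀ + 1) / ε with hMadef
  set M : ℝ := max (max Ma M₂) (max (48 * k ^ 2 / ε + 1) 1) with hMdef
  have hM1 : (1 : ℝ) ≤ M := le_max_of_le_right (le_max_right _ _)
  refine ⟨M, lt_of_lt_of_le one_pos hM1, ?_⟩
  intro r hr N hN α hcont hqg hmono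
  have hr1 : (1 : ℝ) ≤ r := hM1.trans hr
  have hrpos : (0 : ℝ) < r := lt_of_lt_of_le one_pos hr1
  have hN1 : (1 : ℝ) ≤ (N : ℝ) := hM1.trans hN
  have hNpos : (0 : ℝ) < (N : ℝ) := lt_of_lt_of_le one_pos hN1
  have hNne : (N : ℝ) ≠ 0 := ne_of_gt hNpos
  -- extract non-monotonicity
  simp only [EpsMonotoneOn] at hmono
  push_neg at hmono
  obtain ⟨s₁, hs₁, s₂, hs₂, hzeq, hfar⟩ := hmono
  set t₁ : ℝ := min s₁ s₂ with ht₁def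
  set t₂ : ℝ := max s₁ s₂ with ht₂def
  have ht₁ : t₁ ∈ Icc (0:ℝ) r := ⟨le_min hs₁.1 hs₂.1, (min_le_left _ _).trans hs₁.2⟩
  have ht₂ : t₂ ∈ Icc (0:ℝ) r := ⟨le_trans hs₁.1 (le_max_left _ _), max_le hs₁.2 hs₂.2⟩
  have hz : HX.height ((α t₁).1.1) = HX.height ((α t₂).1.1) := by
    rcases le_total s₁ s₂ with h | h
    · rw [ht₁def, ht₂def, min_eq_left h, max_eq_right h]; exact hzeq
    · rw [ht₁def, ht₂def, min_eq_right h, max_eq_left h]; exact hzeq.symm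
  set L : ℝ := t₂ - t₁ with hLdef
  have hL : ε * r < L := by
    have h1 : L = |s₁ - s₂| := by
      rw [hLdef, ht₁def, ht₂def, abs_sub_comm s₁ s₂]
      exact max_sub_min_eq_abs s₁ s₂
    rw [h1]
    simpa using hfar
  have hεr : (0 : ℝ) < ε * r := mul_pos hε hrpos
  have hL0 : (0 : ℝ) < L := lt_trans hεr hL
  have hLr : L ≤ r := by
    rw [hLdef]; have := ht₂.2; have := ht₁.1; linarith
  set z : ℝ := HX.height ((α t₁).1.1) with hzdef
  set n : ℕ := ⌈L⌉₊ with hndef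
  have hn1 : 1 ≤ n := Nat.ceil_pos.mpr hL0
  have hnpos : (0 : ℝ) < (n : ℝ) := by exact_mod_cast hn1
  have hnne : (n : ℝ) ≠ 0 := ne_of_gt hnpos
  have hLn : L ≤ (n : ℝ) := Nat.le_ceil L
  set m : ℕ := ⌈Real.logb 2 (r + 1)⌉₊ with hmdef
  have hlogb0 : 0 ≤ Real.logb 2 (r + 1) := Real.logb_nonneg (by norm_num) (by linarith)
  have hm_le : (m : ℝ) ≤ Real.logb 2 (r + 1) + 1 := (Nat.ceil_lt_add_one hlogb0).le
  have hnm : n ≤ 2 ^ m := by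
    have hle := Real.rpow_le_rpow_of_exponent_le (by norm_num : (1:ℝ) ≤ 2)
      (Nat.le_ceil (Real.logb 2 (r + 1)))
    rw [Real.rpow_logb (by norm_num) (by norm_num) (by linarith : (0:ℝ) < r + 1)] at hle
    rw [Real.rpow_natCast] at hle
    have h1 : (n : ℝ) < L + 1 := Nat.ceil_lt_add_one hL0.le
    have h2 : (n : ℝ) ≤ ((2 ^ m : ℕ) : ℝ) := by push_cast; linarith
    exact_mod_cast h2
  -- the chain
  set u : ℕ → ℝ := fun i => t₁ + (i : ℝ) * (L / n) with hudef
  have hu0 : u 0 = t₁ := by simp [hudef]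
  have hun : u n = t₂ := by
    simp only [hudef]
    rw [mul_comm, div_mul_cancel₀ L hnne, hLdef]; ring
  have hu_bd : ∀ i : ℕ, i ≤ n → t₁ ≤ u i ∧ u i ≤ t₂ := by
    intro i hi
    constructor
    · simp only [hudef]
      have : 0 ≤ (i : ℝ) * (L / n) := by positivity
      linarith
    · simp only [hudef]
      have h1 : (i : ℝ) ≤ (n : ℝ) := by exact_mod_cast hi
      have h2 : (i : ℝ) * (L / n) ≤ (n : ℝ) * (L / n) :=
        mul_le_mul_of_nonneg_right h1 (by positivity)
      rw [mul_comm (n:ℝ), div_mul_cancel₀ L hnne] at h2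
      rw [hLdef] at *
      linarith
  have humem : ∀ i : ℕ, i ≤ n → u i ∈ Icc (0:ℝ) r := by
    intro i hi
    obtain ⟨h1, h2⟩ := hu_bd i hi
    exact ⟨le_trans ht₁.1 h1, le_trans h2 ht₂.2⟩
  have hstep1 : L / (n : ℝ) ≤ 1 := (div_le_one hnpos).mpr hLn
  have hdstep : ∀ i : ℕ, i < n → P.d (α (u i)) (α (u (i + 1))) ≤ k + c := by
    intro i hi
    have h1 := (hqg (u i) (humem i hi.le) (u (i + 1)) (humem (i + 1) hi)).2
    have h2 : |u i - u (i + 1)| = L / n := by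
      have : u (i + 1) - u i = L / n := by
        simp only [hudef]; push_cast; ring
      rw [abs_sub_comm, this, abs_of_nonneg (by positivity)]
    rw [h2] at h1
    have h3 : k * (L / n) ≤ k * 1 := mul_le_mul_of_nonneg_left hstep1 hk0.le
    linarith
  have hXYstep : ∀ i : ℕ, i < n →
      dist ((α (u i)).1.1) ((α (u (i + 1))).1.1) +
        dist ((α (u i)).1.2) ((α (u (i + 1))).1.2) ≤ 2 * (k + c) := by
    intro i hi
    have h1 := P.two_d_ge (α (u i)) (α (u (i + 1)))
    have h2 := hdstep i hi
    linarith
  set G : ℕ → ℝ := fun i => HX.height ((α (u i)).1.1) with hGdef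
  have hG0 : G 0 = z := by simp only [hGdef, hu0, hzdef]
  have hGn : G n = z := by simp only [hGdef, hun, hzdef]; exact hz.symm
  have hYh : ∀ t : ℝ, HY.height ((α t).1.2) = - HX.height ((α t).1.1) := by
    intro t
    have := (α t).2
    linarith
  have hmem0 : (0 : ℕ) ∈ Finset.range (n + 1) := Finset.mem_range.mpr (Nat.succ_pos n)
  obtain ⟨ip, hipmem, hip⟩ :=
    Finset.exists_max_image (Finset.range (n + 1)) G ⟨0, hmem0⟩
  obtain ⟨im, himmem, him⟩ :=
    Finset.exists_min_image (Finset.range (n + 1)) G ⟨0, hmem0⟩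
  have hipn : ip ≤ n := by have := Finset.mem_range.mp hipmem; omega
  have himn : im ≤ n := by have := Finset.mem_range.mp himmem; omega
  set A : ℝ := G ip - z with hAdef
  set B : ℝ := z - G im with hBdef
  have hA0 : 0 ≤ A := by
    have := hip 0 hmem0
    rw [hG0] at this
    simp only [hAdef]; linarith
  have hB0 : 0 ≤ B := by
    have := him 0 hmem0
    rw [hG0] at this
    simp only [hBdef]; linarith
  -- X chain
  have hchX := HX.chain_bound m n hn1 hnm (fun i => (α (u i)).1.1)
    (2 * G ip + 2 * (k + c)) (by
      intro i hi
      have h1 := hip i (Finset.mem_range.mpr (by omega))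
      have h2 := hip (i + 1) (Finset.mem_range.mpr (by omega))
      have h3 := hXYstep i hi
      have h4 : (0:ℝ) ≤ dist ((α (u i)).1.2) ((α (u (i + 1))).1.2) := dist_nonneg
      simp only [hGdef] at h1 h2
      linarith)
  rw [hu0, hun] at hchX
  have hzt₁ : HX.height ((α t₁).1.1) = z := rfl
  have hzt₂ : HX.height ((α t₂).1.1) = z := hz.symm
  rw [hzt₁, hzt₂] at hchX
  have hchX' : z + z + dist ((α t₁).1.1) ((α t₂).1.1)
      ≤ 2 * G ip + 2 * (k + c) + 2 * HX.δ * m := hchX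
  -- Y chain
  have hchY := HY.chain_bound m n hn1 hnm (fun i => (α (u i)).1.2)
    (2 * (-(G im)) + 2 * (k + c)) (by
      intro i hi
      have h1 := him i (Finset.mem_range.mpr (by omega))
      have h2 := him (i + 1) (Finset.mem_range.mpr (by omega))
      have h3 := hXYstep i hi
      have h4 : (0:ℝ) ≤ dist ((α (u i)).1.1) ((α (u (i + 1))).1.1) := dist_nonneg
      simp only [hGdef] at h1 h2
      simp only [hYh]
      linarith)
  rw [hu0, hun, hYh t₁, hYh t₂, hzt₁, hzt₂] at hchY
  have hchY' : -z + -z + dist ((α t₁).1.2) ((α t₂).1.2)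
      ≤ 2 * (-(G im)) + 2 * (k + c) + 2 * HY.δ * m := hchY
  -- lower bound on dX + dY
  have hlow := (hqg t₁ ht₁ t₂ ht₂).1
  have habsL : |t₁ - t₂| = L := by
    rw [abs_sub_comm, hLdef]
    exact abs_of_nonneg (by linarith)
  rw [habsL] at hlow
  have happrox := P.approx (α t₁) (α t₂)
  have hzz : |HX.height ((α t₁).1.1) - HX.height ((α t₂).1.1)| = 0 := by
    rw [hzt₁, hzt₂, sub_self, abs_zero]
  rw [hzz] at happrox
  have happrox' := abs_le.mp happrox
  have hXY_low : k⁻¹ * L - c - P.C ≤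
      dist ((α t₁).1.1) ((α t₂).1.1) + dist ((α t₁).1.2) ((α t₂).1.2) := by
    have h1 := happrox'.1
    linarith
  have hABlow : k⁻¹ * L - c - P.C ≤ 2 * A + 2 * B + 4 * (k + c) + 2 * Δ * m := by
    simp only [hAdef, hBdef, hΔdef]
    linarith [hchX', hchY', hXY_low]
  -- the grid
  set η : ℝ := k * (r / N) + c with hηdef
  have hη0 : 0 ≤ η := by positivity
  set idx : ℝ → ℕ := fun t => ⌊t * N / r⌋₊ with hidxdef
  set g : ℕ → ℝ := fun j => HX.height ((α ((j : ℝ) * r / N)).1.1) with hgdef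
  have hgrid : ∀ t, t ∈ Icc (0:ℝ) r → idx t ≤ N ∧
      |g (idx t) - HX.height ((α t).1.1)| ≤ η := by
    intro t ht
    obtain ⟨ht0, htr⟩ := ht
    have harg0 : 0 ≤ t * N / r := by positivity
    have hfl_le : ((idx t : ℕ) : ℝ) ≤ t * N / r := Nat.floor_le harg0
    have hfl_lt : t * N / r < (idx t : ℝ) + 1 := Nat.lt_floor_add_one _
    have hT_le : ((idx t : ℕ) : ℝ) * r / N ≤ t := by
      rw [div_le_iff₀ hNpos]
      have := (le_div_iff₀ hrpos).mp hfl_le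
      linarith
    have hT_ge : t - r / N ≤ ((idx t : ℕ) : ℝ) * r / N := by
      have h1 : t * N < ((idx t : ℝ) + 1) * r := (div_lt_iff₀ hrpos).mp hfl_lt
      rw [sub_le_iff_le_add, ← add_div, le_div_iff₀ hNpos]
      linarith
    have hidxN : idx t ≤ N := by
      have h1 : t * N / r ≤ (N : ℝ) := by
        rw [div_le_iff₀ hrpos]
        have := mul_le_mul_of_nonneg_right htr hNpos.le
        linarith
      have h2 : ((idx t : ℕ) : ℝ) ≤ (N : ℝ) := le_trans hfl_le h1
      exact_mod_cast h2
    have hTmem : ((idx t : ℕ) : ℝ) * r / N ∈ Icc (0:ℝ) r := by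
      constructor
      · positivity
      · exact le_trans hT_le htr
    refine ⟨hidxN, ?_⟩
    have hlip := P.height_lip (α (((idx t : ℕ) : ℝ) * r / N)) (α t)
    have hd := (hqg _ hTmem t ⟨ht0, htr⟩).2
    have habs : |((idx t : ℕ) : ℝ) * r / N - t| ≤ r / N := by
      rw [abs_le]
      constructor <;> linarith
    have h5 : k * |((idx t : ℕ) : ℝ) * r / N - t| ≤ k * (r / N) :=
      mul_le_mul_of_nonneg_left habs hk0.le
    simp only [hgdef, hηdef]
    calc |HX.height ((α (((idx t : ℕ) : ℝ) * r / N)).1.1) - HX.height ((α t).1.1)|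
        ≤ P.d (α (((idx t : ℕ) : ℝ) * r / N)) (α t) := hlip
      _ ≤ k * |((idx t : ℕ) : ℝ) * r / N - t| + c := hd
      _ ≤ k * (r / N) + c := by linarith
  have hidxmono : ∀ s t : ℝ, s ≤ t → idx s ≤ idx t := by
    intro s t hst
    apply Nat.floor_mono
    gcongr
  set v₁ : ℝ := min (u ip) (u im) with hv₁def
  set v₂ : ℝ := max (u ip) (u im) with hv₂def
  have hupmem := humem ip hipn
  have hummem := humem im himn
  have hv₁mem : v₁ ∈ Icc (0:ℝ) r := ⟨le_min hupmem.1 hummem.1, (min_le_left _ _).trans hupmem.2⟩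
  have hv₂mem : v₂ ∈ Icc (0:ℝ) r := ⟨le_trans hupmem.1 (le_max_left _ _), max_le hupmem.2 hummem.2⟩
  have ht₁v₁ : t₁ ≤ v₁ := le_min (hu_bd ip hipn).1 (hu_bd im himn).1
  have hv₁v₂ : v₁ ≤ v₂ := min_le_max
  have hv₂t₂ : v₂ ≤ t₂ := max_le (hu_bd ip hipn).2 (hu_bd im himn).2
  set j₀ : ℕ := idx t₁ with hj₀def
  set j₁ : ℕ := idx v₁ with hj₁def
  set j₂ : ℕ := idx v₂ with hj₂def
  set j₃ : ℕ := idx t₂ with hj₃def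
  have h01 : j₀ ≤ j₁ := hidxmono _ _ ht₁v₁
  have h12 : j₁ ≤ j₂ := hidxmono _ _ hv₁v₂
  have h23 : j₂ ≤ j₃ := hidxmono _ _ hv₂t₂
  have h3N : j₃ ≤ N := (hgrid t₂ ht₂).1
  -- sum decomposition
  have e1 : (∑ j ∈ Finset.Ico 0 j₀, |g j - g (j+1)|) + ∑ j ∈ Finset.Ico j₀ j₁, |g j - g (j+1)|
      = ∑ j ∈ Finset.Ico 0 j₁, |g j - g (j+1)| :=
    Finset.sum_Ico_consecutive _ (Nat.zero_le _) h01
  have e2 : (∑ j ∈ Finset.Ico 0 j₁, |g j - g (j+1)|) + ∑ j ∈ Finset.Ico j₁ j₂, |g j - g (j+1)|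
      = ∑ j ∈ Finset.Ico 0 j₂, |g j - g (j+1)| :=
    Finset.sum_Ico_consecutive _ (Nat.zero_le _) h12
  have e3 : (∑ j ∈ Finset.Ico 0 j₂, |g j - g (j+1)|) + ∑ j ∈ Finset.Ico j₂ j₃, |g j - g (j+1)|
      = ∑ j ∈ Finset.Ico 0 j₃, |g j - g (j+1)| :=
    Finset.sum_Ico_consecutive _ (Nat.zero_le _) h23
  have e4 : (∑ j ∈ Finset.Ico 0 j₃, |g j - g (j+1)|) + ∑ j ∈ Finset.Ico j₃ N, |g j - g (j+1)|
      = ∑ j ∈ Finset.Ico 0 N, |g j - g (j+1)| :=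
    Finset.sum_Ico_consecutive _ (Nat.zero_le _) h3N
  have B1 := abs_telescope g 0 j₀ (Nat.zero_le _)
  have B2 := abs_telescope g j₀ j₁ h01
  have B3 := abs_telescope g j₁ j₂ h12
  have B4 := abs_telescope g j₂ j₃ h23
  have B5 := abs_telescope g j₃ N h3N
  have hsum_ge : |g 0 - g j₀| + |g j₀ - g j₁| + |g j₁ - g j₂| + |g j₂ - g j₃| + |g j₃ - g N|
      ≤ ∑ j ∈ Finset.range N, |g j - g (j+1)| := by
    rw [Finset.range_eq_Ico, ← e4, ← e3, ← e2, ← e1]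
    linarith
  -- grid heights
  have ha0 : |g j₀ - z| ≤ η := by
    have h1 := (hgrid t₁ ht₁).2
    rw [hzt₁] at h1
    exact h1
  have ha3 : |g j₃ - z| ≤ η := by
    have h1 := (hgrid t₂ ht₂).2
    rw [hzt₂] at h1
    exact h1
  have hGip : HX.height ((α (u ip)).1.1) = z + A := by
    simp only [hAdef, hGdef]; ring
  have hGim : HX.height ((α (u im)).1.1) = z - B := by
    simp only [hBdef, hGdef]; ring
  have hfive : |g 0 - g N| + (2 * A + 2 * B - 8 * η) ≤
      |g 0 - g j₀| + |g j₀ - g j₁| + |g j₁ - g j₂| + |g j₂ - g j₃| + |g j₃ - g N| := by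
    rcases le_total (u ip) (u im) with hc1 | hc1
    · have hv₁eq : v₁ = u ip := min_eq_left hc1
      have hv₂eq : v₂ = u im := max_eq_right hc1
      have ha1 : |g j₁ - (z + A)| ≤ η := by
        have h1 := (hgrid v₁ hv₁mem).2
        rw [hv₁eq] at h1
        rw [← hGip, hj₁def, hv₁eq]
        exact h1
      have ha2 : |g j₂ - (z - B)| ≤ η := by
        have h1 := (hgrid v₂ hv₂mem).2
        rw [hv₂eq] at h1
        rw [← hGim, hj₂def, hv₂eq]
        exact h1
      exact five_chain (g 0) (g j₀) (g j₁) (g j₂) (g j₃) (g N) z A B η ha0 ha3 ha1 ha2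
    · have hv₁eq : v₁ = u im := min_eq_right hc1
      have hv₂eq : v₂ = u ip := max_eq_left hc1
      have ha1 : |g j₁ - (z - B)| ≤ η := by
        have h1 := (hgrid v₁ hv₁mem).2
        rw [hv₁eq] at h1
        rw [← hGim, hj₁def, hv₁eq]
        exact h1
      have ha2 : |g j₂ - (z + A)| ≤ η := by
        have h1 := (hgrid v₂ hv₂mem).2
        rw [hv₂eq] at h1
        rw [← hGip, hj₂def, hv₂eq]
        exact h1
      have h5 := five_chain (g N) (g j₃) (g j₂) (g j₁) (g j₀) (g 0) z A B η ha3 ha0 ha2 ha1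
      have c1 : |g N - g 0| = |g 0 - g N| := abs_sub_comm _ _
      have c2 : |g N - g j₃| = |g j₃ - g N| := abs_sub_comm _ _
      have c3 : |g j₃ - g j₂| = |g j₂ - g j₃| := abs_sub_comm _ _
      have c4 : |g j₂ - g j₁| = |g j₁ - g j₂| := abs_sub_comm _ _
      have c5 : |g j₁ - g j₀| = |g j₀ - g j₁| := abs_sub_comm _ _
      have c6 : |g j₀ - g 0| = |g 0 - g j₀| := abs_sub_comm _ _
      rw [c1, c2, c3, c4, c5, c6] at h5
      linarith
  -- identify with the statement's sum
  have hsum_eq : (∑ j ∈ Finset.range N,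
      |HX.height ((α ((j : ℝ) * r / (N : ℝ))).1.1) -
        HX.height ((α (((j : ℝ) + 1) * r / (N : ℝ))).1.1)|)
      = ∑ j ∈ Finset.range N, |g j - g (j+1)| := by
    apply Finset.sum_congr rfl
    intro j _
    simp only [hgdef]
    push_cast
    ring_nf
  have hg0 : g 0 = HX.height ((α 0).1.1) := by
    simp only [hgdef]
    norm_num
  have hgN : g N = HX.height ((α r).1.1) := by
    simp only [hgdef]
    rw [mul_comm, mul_div_assoc, div_self hNne, mul_one]
  clear_value Δ q b K₀ Ma M t₁ t₂ L z n m u G A B η idx g v₁ v₂ j₀ j₁ j₂ j₃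
  -- numeric part
  have hεL : k⁻¹ * (ε * r) ≤ k⁻¹ * L :=
    mul_le_mul_of_nonneg_left hL.le (inv_nonneg.mpr hk0.le)
  -- F1'
  have hMa : Ma ≤ r := by
    have h1 : Ma ≤ M := by rw [hMdef]; exact le_max_of_le_left (le_max_left _ _)
    exact h1.trans hr
  have hF1 : K₀ ≤ ε / (6 * k) * r := by
    have h1 : ε / (6 * k) * Ma = K₀ + 1 := by
      rw [hMadef]
      field_simp
    have h2 : ε / (6 * k) * Ma ≤ ε / (6 * k) * r :=
      mul_le_mul_of_nonneg_left hMa (by positivity)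
    linarith
  -- F2'
  have hM₂r : M₂ ≤ r := by
    have h1 : M₂ ≤ M := by rw [hMdef]; exact le_max_of_le_left (le_max_right _ _)
    exact h1.trans hr
  have hF2 : q * Real.log (r + 1) ≤ ε / (6 * k) * r := by
    have h1 : Real.log (r + 1) ≤ b * r := hM₂ r hM₂r
    have h2 : q * Real.log (r + 1) ≤ q * (b * r) := mul_le_mul_of_nonneg_left h1 hq0
    have h3 : q * (b * r) ≤ (q + 1) * b * r := by
      have h5 : 0 ≤ b * r := mul_nonneg hbpos.le hrpos.le
      have h6 : q * (b * r) ≤ (q + 1) * (b * r) :=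
        mul_le_mul_of_nonneg_right (by linarith) h5
      linarith [h6, mul_assoc (q + 1) b r]
    have h4 : (q + 1) * b = ε / (6 * k) := by
      have hq1 : q + 1 ≠ 0 := by linarith
      rw [hbdef, mul_comm, div_mul_cancel₀ _ hq1]
    rw [h4] at h3
    linarith
  -- F3
  have hNM : 48 * k ^ 2 / ε + 1 ≤ (N : ℝ) := by
    have h1 : 48 * k ^ 2 / ε + 1 ≤ M := by
      rw [hMdef]; exact le_trans (le_max_left _ _) (le_max_right _ _)
    exact h1.trans hN
  have hF3 : 8 * k * (r / N) ≤ ε / (6 * k) * r := by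
    have h1 : 48 * k ^ 2 ≤ ε * (N : ℝ) := by
      have h2 : ε * (48 * k ^ 2 / ε) = 48 * k ^ 2 := by field_simp
      have h3 : ε * (48 * k ^ 2 / ε + 1) ≤ ε * N := mul_le_mul_of_nonneg_left hNM hε.le
      rw [mul_add, mul_one] at h3
      linarith
    have h4 : 8 * k / (N : ℝ) ≤ ε / (6 * k) := by
      rw [div_le_div_iff₀ hNpos (by positivity)]
      have h6 : 8 * k * (6 * k) = 48 * k ^ 2 := by ring
      linarith
    have h5 : 8 * k / (N : ℝ) * r ≤ ε / (6 * k) * r :=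
      mul_le_mul_of_nonneg_right h4 hrpos.le
    calc 8 * k * (r / N) = 8 * k / (N : ℝ) * r := by ring
      _ ≤ ε / (6 * k) * r := h5
  -- m bound
  have hmb : 2 * Δ * (m : ℝ) ≤ 2 * Δ + q * Real.log (r + 1) := by
    have h1 : 2 * Δ * (m : ℝ) ≤ 2 * Δ * (Real.logb 2 (r + 1) + 1) :=
      mul_le_mul_of_nonneg_left hm_le (by linarith)
    have h2 : 2 * Δ * Real.logb 2 (r + 1) = q * Real.log (r + 1) := by
      rw [hqdef, Real.logb]
      ring
    rw [mul_add, mul_one] at h1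
    linarith
  -- identities
  have id1 : k⁻¹ * (ε * r) = 2 * (1 / (2 * k) * ε * r) := by
    field_simp
  have id2 : ε / (6 * k) * r = (1 / 3) * (2 * (1 / (2 * k) * ε * r) / 2) := by
    field_simp
    ring
  -- put everything together
  rw [hsum_eq, ← hg0, ← hgN]
  have htot : 2 * A + 2 * B - 8 * η ≤ (∑ j ∈ Finset.range N, |g j - g (j+1)|) - |g 0 - g N| := by
    linarith [hfive, hsum_ge]
  have hJ : k⁻¹ * (ε * r) - (13 * c + P.C + 4 * k + 2 * Δ * m + 8 * (k * (r / N)))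
      ≤ 2 * A + 2 * B - 8 * η := by
    simp only [hηdef]
    have := hABlow
    linarith [hεL]
  have hJ2 : 13 * c + P.C + 4 * k + 2 * Δ * m + 8 * (k * (r / N))
      ≤ 3 * (ε / (6 * k) * r) := by
    have h1 : 13 * c + P.C + 4 * k + 2 * Δ * m + 8 * (k * (r / N))
        ≤ K₀ + q * Real.log (r + 1) + 8 * k * (r / N) := by
      simp only [hK₀def]
      have := hmb
      linarith
    linarith [hF1, hF2, hF3]
  have hfinal : 1 / (2 * k) * ε * r ≤ k⁻¹ * (ε * r) - 3 * (ε / (6 * k) * r) := by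
    rw [id1]
    have h6 : 3 * (ε / (6 * k) * r) = 1 / (2 * k) * ε * r := by
      field_simp
      ring
    rw [h6]
    linarith
  linarith [hJ, hJ2, htot, hfinal]
end
end

section
/- (Vertical quadrilateral lemma.) Let X and Y be proper, geodesically complete, Gromov δ-hyperbolic, Busemann metric spaces. Let a₁, a₂, b₁, b₂ ∈ X⋈Y, let D > 1, and for i,j ∈ {1,2} let V_ij: [0,l_ij] → X⋈Y be vertical geodesic segments with l_ij > 2D such that: (a) d_⋈(V_ij(0), a_i) ≤ D; (b) d_⋈(V_ij(l_ij), b_j) ≤ D; (c) d_⋈(V_i1(t), im(V_i2)) ≥ t/10 − D for all t ∈ [0,l_i1]; (d) d_⋈(V_1j(l_1j − t), im(V_2j)) ≥ t/10 − D for all t ∈ [0,l_1j]; and suppose the four V_ij all have the same orientation. Then there is a constant M depending only on X⋈Y such that: if all four are upward oriented then d_Y(a₁^Y, a₂^Y) ≤ M·D and d_X(b₁^X, b₂^X) ≤ M·D; and if all four are downward oriented then d_X(a₁^X, a₂^X) ≤ M·D and d_Y(b₁^Y, b₂^Y) ≤ M·D. -/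
open Set Filter MeasureTheory
open scoped ENNReal

noncomputable section

section AuxHoro

variable {Z : Type*} [MetricSpace Z]

lemma hp_ray_dist (H : HoroSpace Z) {r s : ℝ} (hr : 0 ≤ r) (hs : 0 ≤ s) :
    dist (H.ray r) (H.ray s) = |r - s| := H.ray_geodesic r hr s hs

/-- auxiliary monotone version of the Busemann-type function -/
def hpg (H : HoroSpace Z) (x : Z) (t : ℝ) : ℝ :=
  dist x (H.ray (max t 0)) - max t 0

lemma hpg_antitone (H : HoroSpace Z) (x : Z) : Antitone (hpg H x) := by
  intro s t hst
  have h3 : max s 0 ≤ max t 0 := max_le_max hst le_rfl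
  have h1 : dist x (H.ray (max t 0)) ≤ dist x (H.ray (max s 0)) +
      dist (H.ray (max s 0)) (H.ray (max t 0)) := dist_triangle _ _ _
  have h2 : dist (H.ray (max s 0)) (H.ray (max t 0)) = |max s 0 - max t 0| :=
    hp_ray_dist H (le_max_right _ _) (le_max_right _ _)
  have h4 : |max s 0 - max t 0| = max t 0 - max s 0 := by
    rw [abs_sub_comm]; exact abs_of_nonneg (by linarith)
  simp only [hpg]
  rw [h2] at h1
  linarith

lemma hpg_lb (H : HoroSpace Z) (x : Z) (t : ℝ) : -(dist x (H.ray 0)) ≤ hpg H x t := by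
  have h1 : dist (H.ray 0) (H.ray (max t 0)) = |0 - max t 0| :=
    hp_ray_dist H le_rfl (le_max_right _ _)
  have h2 : |(0:ℝ) - max t 0| = max t 0 := by
    rw [abs_sub_comm, sub_zero]; exact abs_of_nonneg (le_max_right _ _)
  have h3 : dist (H.ray 0) (H.ray (max t 0)) ≤ dist (H.ray 0) x + dist x (H.ray (max t 0)) :=
    dist_triangle _ _ _
  have h4 : dist (H.ray 0) x = dist x (H.ray 0) := dist_comm _ _
  simp only [hpg]
  rw [h1] at h3
  linarith

lemma hpg_bdd (H : HoroSpace Z) (x : Z) : BddBelow (Set.range (hpg H x)) :=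
  ⟨-(dist x (H.ray 0)), by rintro y ⟨t, rfl⟩; exact hpg_lb H x t⟩

lemma hp_height_eq (H : HoroSpace Z) (x : Z) :
    H.height x = -(⨅ t : ℝ, hpg H x t) := by
  unfold HoroSpace.height
  congr 1
  have he : (fun t : ℝ => dist x (H.ray t) - t) =ᶠ[atTop] hpg H x := by
    filter_upwards [eventually_ge_atTop (0:ℝ)] with t ht
    simp [hpg, max_eq_left ht]
  rw [limsup_congr he]
  exact (tendsto_atTop_ciInf (hpg_antitone H x) (hpg_bdd H x)).limsup_eq

lemma hp_height_le_ray (H : HoroSpace Z) (x : Z) {r : ℝ} (hr : 0 ≤ r) :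
    r - H.height x ≤ dist x (H.ray r) := by
  have h1 : (⨅ t : ℝ, hpg H x t) ≤ hpg H x r := ciInf_le (hpg_bdd H x) r
  have h2 : hpg H x r = dist x (H.ray r) - r := by simp [hpg, max_eq_left hr]
  have h3 := hp_height_eq H x
  rw [h2] at h1
  linarith

lemma hp_exists_ray (H : HoroSpace Z) (x : Z) {ε : ℝ} (hε : 0 < ε) :
    ∃ R : ℝ, 0 ≤ R ∧ ∀ r, R ≤ r → dist x (H.ray r) ≤ r - H.height x + ε := by
  have hlt : (⨅ t : ℝ, hpg H x t) < (⨅ t : ℝ, hpg H x t) + ε := by linarith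
  obtain ⟨t₀, ht₀⟩ := exists_lt_of_ciInf_lt hlt
  refine ⟨max t₀ 0, le_max_right _ _, fun r hr => ?_⟩
  have hr0 : 0 ≤ r := le_trans (le_max_right _ _) hr
  have h1 : hpg H x r ≤ hpg H x t₀ := hpg_antitone H x (le_trans (le_max_left _ _) hr)
  have h2 : hpg H x r = dist x (H.ray r) - r := by simp [hpg, max_eq_left hr0]
  have h3 := hp_height_eq H x
  linarith

/-- Step A: two vertical unit-speed height-increasing segments at matched heights
do not spread (up to `2δ`) going up. -/
lemma hp_stepA (H : HoroSpace Z) {x y z w : Z} {t : ℝ} (ht : 0 ≤ t)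
    (hxy : dist x y = t) (hzw : dist z w = t)
    (hy : H.height y = H.height x + t) (hw : H.height w = H.height z + t)
    (hxz : H.height x = H.height z) :
    dist y w ≤ dist x z + 2 * H.δ := by
  refine le_of_forall_pos_le_add fun ε hε => ?_
  obtain ⟨R1, hR1, h1⟩ := hp_exists_ray H y (half_pos hε)
  obtain ⟨R2, hR2, h2⟩ := hp_exists_ray H w (half_pos hε)
  set r := max R1 R2 with hrdef
  have hr0 : 0 ≤ r := le_trans hR1 (le_max_left _ _)
  have hym := h1 r (le_max_left _ _)
  have hwm := h2 r (le_max_right _ _)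
  have hxm := hp_height_le_ray H x hr0
  have h4 := H.hyperbolic y w x (H.ray r)
  simp only at h4
  have hda : dist y x + dist w (H.ray r) ≤ r - H.height x + ε/2 + dist x z := by
    have : dist y x = t := by rw [dist_comm]; exact hxy
    have hd0 : (0:ℝ) ≤ dist x z := dist_nonneg
    linarith
  have hdb : dist y (H.ray r) + dist w x ≤ r - H.height x + ε/2 + dist x z := by
    have h5 : dist w x ≤ dist w z + dist z x := dist_triangle _ _ _
    have h6 : dist w z = t := by rw [dist_comm]; exact hzw
    have h7 : dist z x = dist x z := dist_comm _ _
    linarith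
  have hmax : max (dist y x + dist w (H.ray r)) (dist y (H.ray r) + dist w x) ≤
      r - H.height x + ε/2 + dist x z := max_le hda hdb
  linarith

end AuxHoro
section AuxVert

variable {Z : Type*} [MetricSpace Z]

/-- an upward vertical geodesic segment parametrized by height -/
def UpVertOn (H : HoroSpace Z) (γ : ℝ → Z) (L : ℝ) : Prop :=
  (∀ t ∈ Icc (0:ℝ) L, ∀ u ∈ Icc (0:ℝ) L, dist (γ t) (γ u) = |t - u|) ∧
  (∀ t ∈ Icc (0:ℝ) L, H.height (γ t) = H.height (γ 0) + t)

lemma hp_vclose' (H : HoroSpace Z) {γ1 γ2 : ℝ → Z} {L1 L2 A B : ℝ}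
    (hU1 : UpVertOn H γ1 L1) (hU2 : UpVertOn H γ2 L2)
    (hA : dist (γ1 0) (γ2 0) ≤ A)
    (hB : |H.height (γ1 0) - H.height (γ2 0)| ≤ B)
    (hBL1 : B ≤ L1) (hBL2 : B ≤ L2)
    {t1 t2 : ℝ} (ht1 : t1 ∈ Icc (0:ℝ) L1) (ht2 : t2 ∈ Icc (0:ℝ) L2)
    (hmatch : H.height (γ1 0) + t1 = H.height (γ2 0) + t2)
    (hg : H.height (γ1 0) ≤ H.height (γ2 0)) :
    dist (γ1 t1) (γ2 t2) ≤ A + B + 2 * H.δ := by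
  have hBnn : 0 ≤ B := le_trans (abs_nonneg _) hB
  set σ := H.height (γ2 0) - H.height (γ1 0) with hσdef
  have hσ0 : 0 ≤ σ := by simp only [hσdef]; linarith
  have hσB : σ ≤ B := by
    have := (abs_le.mp hB).1
    simp only [hσdef]; linarith
  have ht1σ : t1 = t2 + σ := by simp only [hσdef]; linarith
  have hσmem : σ ∈ Icc (0:ℝ) L1 := ⟨hσ0, by linarith⟩
  have h0mem2 : (0:ℝ) ∈ Icc (0:ℝ) L2 := ⟨le_rfl, by linarith⟩
  have hxy : dist (γ1 σ) (γ1 t1) = t2 := by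
    rw [hU1.1 σ hσmem t1 ht1, show σ - t1 = -t2 by linarith, abs_neg, abs_of_nonneg ht2.1]
  have hzw : dist (γ2 0) (γ2 t2) = t2 := by
    rw [hU2.1 0 h0mem2 t2 ht2, show (0:ℝ) - t2 = -t2 by ring, abs_neg, abs_of_nonneg ht2.1]
  have hy : H.height (γ1 t1) = H.height (γ1 σ) + t2 := by
    rw [hU1.2 t1 ht1, hU1.2 σ hσmem]; linarith
  have hw : H.height (γ2 t2) = H.height (γ2 0) + t2 := hU2.2 t2 ht2
  have hxz : H.height (γ1 σ) = H.height (γ2 0) := by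
    rw [hU1.2 σ hσmem]; simp only [hσdef]; linarith
  have key := hp_stepA H ht2.1 hxy hzw hy hw hxz
  have htri : dist (γ1 σ) (γ2 0) ≤ dist (γ1 σ) (γ1 0) + dist (γ1 0) (γ2 0) :=
    dist_triangle _ _ _
  have hσd : dist (γ1 σ) (γ1 0) = σ := by
    rw [hU1.1 σ hσmem 0 ⟨le_rfl, by linarith⟩, sub_zero, abs_of_nonneg hσ0]
  linarith

lemma hp_vclose (H : HoroSpace Z) {γ1 γ2 : ℝ → Z} {L1 L2 A B : ℝ}
    (hU1 : UpVertOn H γ1 L1) (hU2 : UpVertOn H γ2 L2)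
    (hA : dist (γ1 0) (γ2 0) ≤ A)
    (hB : |H.height (γ1 0) - H.height (γ2 0)| ≤ B)
    (hBL1 : B ≤ L1) (hBL2 : B ≤ L2)
    {t1 t2 : ℝ} (ht1 : t1 ∈ Icc (0:ℝ) L1) (ht2 : t2 ∈ Icc (0:ℝ) L2)
    (hmatch : H.height (γ1 0) + t1 = H.height (γ2 0) + t2) :
    dist (γ1 t1) (γ2 t2) ≤ A + B + 2 * H.δ := by
  rcases le_total (H.height (γ1 0)) (H.height (γ2 0)) with hg | hg
  · exact hp_vclose' H hU1 hU2 hA hB hBL1 hBL2 ht1 ht2 hmatch hg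
  · have hA' : dist (γ2 0) (γ1 0) ≤ A := by rw [dist_comm]; exact hA
    have hB' : |H.height (γ2 0) - H.height (γ1 0)| ≤ B := by rw [abs_sub_comm]; exact hB
    rw [dist_comm]
    exact hp_vclose' H hU2 hU1 hA' hB' hBL2 hBL1 ht2 ht1 (by linarith) hg

lemma hp_vCR' (H : HoroSpace Z) {γ1 γ2 : ℝ → Z} {L1 L2 A B : ℝ}
    (hU1 : UpVertOn H γ1 L1) (hU2 : UpVertOn H γ2 L2)
    (hA : dist (γ1 0) (γ2 0) ≤ A)
    (hB : |H.height (γ1 0) - H.height (γ2 0)| ≤ B)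
    (hBL1 : B ≤ L1) (hBL2 : B ≤ L2)
    {t1 t2 : ℝ} (ht1 : t1 ∈ Icc (0:ℝ) L1) (ht2 : t2 ∈ Icc (0:ℝ) L2)
    (hle : H.height (γ1 0) + t1 ≤ H.height (γ2 0) + t2) :
    dist (γ1 t1) (γ2 t2) ≤ A + B + 2 * H.δ +
      (H.height (γ2 0) + t2 - (H.height (γ1 0) + t1)) := by
  have hBnn : 0 ≤ B := le_trans (abs_nonneg _) hB
  have hδ := H.δ_nonneg
  by_cases hc : H.height (γ2 0) ≤ H.height (γ1 0) + t1
  · set τ2 := H.height (γ1 0) + t1 - H.height (γ2 0) with hτdef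
    have hτ0 : 0 ≤ τ2 := by simp only [hτdef]; linarith
    have hτt2 : τ2 ≤ t2 := by simp only [hτdef]; linarith
    have hτmem : τ2 ∈ Icc (0:ℝ) L2 := ⟨hτ0, le_trans hτt2 ht2.2⟩
    have hmatch : H.height (γ1 0) + t1 = H.height (γ2 0) + τ2 := by
      simp only [hτdef]; ring
    have h1 := hp_vclose H hU1 hU2 hA hB hBL1 hBL2 ht1 hτmem hmatch
    have h2 : dist (γ2 τ2) (γ2 t2) = t2 - τ2 := by
      rw [hU2.1 τ2 hτmem t2 ht2, show τ2 - t2 = -(t2 - τ2) by ring, abs_neg,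
        abs_of_nonneg (by linarith)]
    have h3 : dist (γ1 t1) (γ2 t2) ≤ dist (γ1 t1) (γ2 τ2) + dist (γ2 τ2) (γ2 t2) :=
      dist_triangle _ _ _
    simp only [hτdef] at h2
    linarith
  · push_neg at hc
    have h1 : dist (γ1 t1) (γ2 t2) ≤ dist (γ1 t1) (γ1 0) + dist (γ1 0) (γ2 0) +
        dist (γ2 0) (γ2 t2) := dist_triangle4 _ _ _ _
    have h2 : dist (γ1 t1) (γ1 0) = t1 := by
      rw [hU1.1 t1 ht1 0 ⟨le_rfl, le_trans (le_trans hBnn hBL1) (le_refl L1)⟩, sub_zero,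
        abs_of_nonneg ht1.1]
    have h3 : dist (γ2 0) (γ2 t2) = t2 := by
      rw [hU2.1 0 ⟨le_rfl, le_trans hBnn hBL2⟩ t2 ht2,
        show (0:ℝ) - t2 = -t2 by ring, abs_neg, abs_of_nonneg ht2.1]
    have h4 : H.height (γ2 0) - H.height (γ1 0) ≤ B := by
      have := (abs_le.mp hB).1; linarith
    linarith

lemma hp_vCR (H : HoroSpace Z) {γ1 γ2 : ℝ → Z} {L1 L2 A B : ℝ}
    (hU1 : UpVertOn H γ1 L1) (hU2 : UpVertOn H γ2 L2)
    (hA : dist (γ1 0) (γ2 0) ≤ A)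
    (hB : |H.height (γ1 0) - H.height (γ2 0)| ≤ B)
    (hBL1 : B ≤ L1) (hBL2 : B ≤ L2)
    {t1 t2 : ℝ} (ht1 : t1 ∈ Icc (0:ℝ) L1) (ht2 : t2 ∈ Icc (0:ℝ) L2) :
    dist (γ1 t1) (γ2 t2) ≤ A + B + 2 * H.δ +
      |H.height (γ1 0) + t1 - (H.height (γ2 0) + t2)| := by
  rcases le_total (H.height (γ1 0) + t1) (H.height (γ2 0) + t2) with hle | hle
  · have := hp_vCR' H hU1 hU2 hA hB hBL1 hBL2 ht1 ht2 hle
    rw [abs_of_nonpos (by linarith)]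
    linarith
  · have hA' : dist (γ2 0) (γ1 0) ≤ A := by rw [dist_comm]; exact hA
    have hB' : |H.height (γ2 0) - H.height (γ1 0)| ≤ B := by rw [abs_sub_comm]; exact hB
    have := hp_vCR' H hU2 hU1 hA' hB' hBL2 hBL1 ht2 ht1 hle
    rw [dist_comm] at this
    rw [abs_of_nonneg (by linarith)]
    linarith

end AuxVert
section AuxCore

variable {Z : Type*} [MetricSpace Z]

/-- one-sided height comparison of the tops of a coarse vertical quadrilateral -/
lemma hp_claim1 (H : HoroSpace Z)
    {W00 W01 W10 W11 : ℝ → Z} {L00 L01 L10 L11 D K0 : ℝ}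
    (hD : 1 < D) (hK0 : 0 ≤ K0)
    (hL00 : 2*D < L00) (hL01 : 2*D < L01) (hL10 : 2*D < L10) (hL11 : 2*D < L11)
    (hU00 : UpVertOn H W00 L00) (hU01 : UpVertOn H W01 L01)
    (hU10 : UpVertOn H W10 L10) (hU11 : UpVertOn H W11 L11)
    (hbot0 : dist (W00 0) (W10 0) ≤ 4*D)
    (hgbot0 : |H.height (W00 0) - H.height (W10 0)| ≤ 2*D)
    (hbot1 : dist (W01 0) (W11 0) ≤ 4*D)
    (hgbot1 : |H.height (W01 0) - H.height (W11 0)| ≤ 2*D)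
    (htop0 : dist (W00 L00) (W01 L01) ≤ 4*D)
    (hgtop0 : |(H.height (W00 0) + L00) - (H.height (W01 0) + L01)| ≤ 2*D)
    (hgtop1 : |(H.height (W10 0) + L10) - (H.height (W11 0) + L11)| ≤ 2*D)
    (hdiv1 : ∀ t ∈ Icc (0:ℝ) L10, ∀ u ∈ Icc (0:ℝ) L11,
      t/10 - K0 ≤ dist (W10 (L10 - t)) (W11 u)) :
    H.height (W10 0) + L10 ≤ H.height (W00 0) + L00 + 10*(K0 + 20*D + 4*H.δ) := by
  have hδ := H.δ_nonneg
  have hD0 : (0:ℝ) < D := by linarith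
  set g00 := H.height (W00 0) with hg00
  set g01 := H.height (W01 0) with hg01
  set g10 := H.height (W10 0) with hg10
  set g11 := H.height (W11 0) with hg11
  by_cases hcase : g10 + L10 ≤ g00 + L00 + 2*D
  · linarith
  push_neg at hcase
  -- parameters
  set t := g10 + L10 - (g00 + L00) with htdef
  have ht2D : 2*D < t := by simp only [htdef]; linarith
  have hb0 := abs_le.mp hgbot0
  have hb1 := abs_le.mp hgbot1
  have htp0 := abs_le.mp hgtop0
  have htp1 := abs_le.mp hgtop1
  have htmem : t ∈ Icc (0:ℝ) L10 := by
    constructor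
    · linarith
    · simp only [htdef]; linarith
  set υ := max (g00 + L00 - g11) 0 with hυdef
  have hυmem : υ ∈ Icc (0:ℝ) L11 := by
    constructor
    · exact le_max_right _ _
    · apply max_le
      · linarith
      · linarith
  have hlow := hdiv1 t htmem υ hυmem
  -- upper bounds
  have hd1 : dist (W00 L00) (W10 (L10 - t)) ≤ 4*D + 2*D + 2*H.δ +
      |H.height (W00 0) + L00 - (H.height (W10 0) + (L10 - t))| :=
    hp_vCR H hU00 hU10 hbot0 hgbot0 (by linarith) (by linarith)
      ⟨by linarith, le_rfl⟩ ⟨by simp only [htdef]; linarith, by linarith⟩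
  have habs0 : |H.height (W00 0) + L00 - (H.height (W10 0) + (L10 - t))| = 0 := by
    rw [show H.height (W00 0) + L00 - (H.height (W10 0) + (L10 - t)) = 0 by
      simp only [htdef, ← hg00, ← hg10]; ring]
    exact abs_zero
  rw [habs0] at hd1
  have hd3 : dist (W01 L01) (W11 υ) ≤ 4*D + 2*D + 2*H.δ +
      |H.height (W01 0) + L01 - (H.height (W11 0) + υ)| :=
    hp_vCR H hU01 hU11 hbot1 hgbot1 (by linarith) (by linarith)
      ⟨by linarith, le_rfl⟩ hυmem
  have habs1 : |H.height (W01 0) + L01 - (H.height (W11 0) + υ)| ≤ 4*D := by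
    rw [abs_le]
    have hup : g11 + υ ≤ g00 + L00 + 2*D := by
      rcases max_cases (g00 + L00 - g11) 0 with ⟨hm, _⟩ | ⟨hm, hm2⟩
      · rw [hυdef, hm]; linarith
      · rw [hυdef, hm]; linarith
    have hlo : g00 + L00 ≤ g11 + υ := by
      have := le_max_left (g00 + L00 - g11) 0
      simp only [hυdef]; linarith
    constructor
    · simp only [← hg01, ← hg11]; linarith
    · simp only [← hg01, ← hg11]; linarith
  have htri : dist (W10 (L10 - t)) (W11 υ) ≤ dist (W10 (L10 - t)) (W00 L00) +
      dist (W00 L00) (W01 L01) + dist (W01 L01) (W11 υ) := dist_triangle4 _ _ _ _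
  rw [dist_comm (W10 (L10 - t)) (W00 L00)] at htri
  have : t/10 - K0 ≤ 20*D + 4*H.δ := by linarith
  simp only [htdef] at this
  linarith

/-- core quadrilateral lemma: the cross tops are close -/
lemma hp_core (H : HoroSpace Z)
    {W00 W01 W10 W11 : ℝ → Z} {L00 L01 L10 L11 D K0 : ℝ}
    (hD : 1 < D) (hK0 : 0 ≤ K0)
    (hL00 : 2*D < L00) (hL01 : 2*D < L01) (hL10 : 2*D < L10) (hL11 : 2*D < L11)
    (hU00 : UpVertOn H W00 L00) (hU01 : UpVertOn H W01 L01)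
    (hU10 : UpVertOn H W10 L10) (hU11 : UpVertOn H W11 L11)
    (hbot0 : dist (W00 0) (W10 0) ≤ 4*D)
    (hgbot0 : |H.height (W00 0) - H.height (W10 0)| ≤ 2*D)
    (hbot1 : dist (W01 0) (W11 0) ≤ 4*D)
    (hgbot1 : |H.height (W01 0) - H.height (W11 0)| ≤ 2*D)
    (htop0 : dist (W00 L00) (W01 L01) ≤ 4*D)
    (htop1 : dist (W10 L10) (W11 L11) ≤ 4*D)
    (hgtop0 : |(H.height (W00 0) + L00) - (H.height (W01 0) + L01)| ≤ 2*D)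
    (hgtop1 : |(H.height (W10 0) + L10) - (H.height (W11 0) + L11)| ≤ 2*D)
    (hdiv0 : ∀ t ∈ Icc (0:ℝ) L00, ∀ u ∈ Icc (0:ℝ) L01,
      t/10 - K0 ≤ dist (W00 (L00 - t)) (W01 u))
    (hdiv1 : ∀ t ∈ Icc (0:ℝ) L10, ∀ u ∈ Icc (0:ℝ) L11,
      t/10 - K0 ≤ dist (W10 (L10 - t)) (W11 u)) :
    dist (W00 L00) (W10 L10) ≤ 206*D + 42*H.δ + 10*K0 := by
  have hδ := H.δ_nonneg
  have c1 := hp_claim1 H hD hK0 hL00 hL01 hL10 hL11 hU00 hU01 hU10 hU11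
    hbot0 hgbot0 hbot1 hgbot1 htop0 hgtop0 hgtop1 hdiv1
  have hbot0' : dist (W10 0) (W00 0) ≤ 4*D := by rw [dist_comm]; exact hbot0
  have hgbot0' : |H.height (W10 0) - H.height (W00 0)| ≤ 2*D := by
    rw [abs_sub_comm]; exact hgbot0
  have hbot1' : dist (W11 0) (W01 0) ≤ 4*D := by rw [dist_comm]; exact hbot1
  have hgbot1' : |H.height (W11 0) - H.height (W01 0)| ≤ 2*D := by
    rw [abs_sub_comm]; exact hgbot1
  have c2 := hp_claim1 H hD hK0 hL10 hL11 hL00 hL01 hU10 hU11 hU00 hU01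
    hbot0' hgbot0' hbot1' hgbot1' htop1 hgtop1 hgtop0 hdiv0
  have h3 := hp_vCR H hU00 hU10 hbot0 hgbot0 (le_of_lt hL00) (le_of_lt hL10)
    ⟨by linarith, le_rfl⟩ ⟨by linarith, le_rfl⟩
  have habs : |H.height (W00 0) + L00 - (H.height (W10 0) + L10)| ≤
      10*(K0 + 20*D + 4*H.δ) := abs_le.mpr ⟨by linarith, by linarith⟩
  linarith

end AuxCore
section AuxMisc

lemma hp_abs_neg_sub (x y : ℝ) : |(-x) - (-y)| = |x - y| := by
  rw [show (-x) - (-y) = -(x - y) by ring, abs_neg]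

lemma hp_affine_up (φ : ℝ → ℝ) {l : ℝ} (hl : 0 < l)
    (habs : ∀ t ∈ Icc (0:ℝ) l, ∀ u ∈ Icc (0:ℝ) l, |φ t - φ u| = |t - u|)
    (hor : φ 0 < φ l) : ∀ t ∈ Icc (0:ℝ) l, φ t = φ 0 + t := by
  intro t ht
  have h0 : (0:ℝ) ∈ Icc (0:ℝ) l := ⟨le_rfl, hl.le⟩
  have hlm : l ∈ Icc (0:ℝ) l := ⟨hl.le, le_rfl⟩
  have h1 : |φ l - φ 0| = l := by rw [habs l hlm 0 h0, sub_zero, abs_of_nonneg hl.le]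
  have h2 : φ l - φ 0 = l := by
    rcases abs_cases (φ l - φ 0) with ⟨he, _⟩ | ⟨he, _⟩ <;> linarith
  have h3 : |φ t - φ 0| = t := by rw [habs t ht 0 h0, sub_zero, abs_of_nonneg ht.1]
  have h4 : |φ l - φ t| = l - t := by
    rw [habs l hlm t ht, abs_of_nonneg (by linarith [ht.2])]
  rcases abs_cases (φ t - φ 0) with ⟨he, _⟩ | ⟨he, _⟩
  · linarith
  · rcases abs_cases (φ l - φ t) with ⟨hf, _⟩ | ⟨hf, _⟩ <;> linarith

lemma hp_affine_down (φ : ℝ → ℝ) {l : ℝ} (hl : 0 < l)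
    (habs : ∀ t ∈ Icc (0:ℝ) l, ∀ u ∈ Icc (0:ℝ) l, |φ t - φ u| = |t - u|)
    (hor : φ l < φ 0) : ∀ t ∈ Icc (0:ℝ) l, φ t = φ 0 - t := by
  have h := hp_affine_up (fun t => -φ t) hl
    (fun t ht u hu => by rw [hp_abs_neg_sub]; exact habs t ht u hu)
    (by linarith)
  intro t ht
  have := h t ht
  linarith

lemma hp_arith {D C dx dy : ℝ} (hD : 1 < D) (hC : 0 ≤ C) (hx : 0 ≤ dx) (hy : 0 ≤ dy) :
    280*D + 10*C + 62*dx + 62*dy ≤ 1000 * (1 + C + dx + dy) * D := by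
  have h1 : 0 ≤ C * (1000*D - 10) := mul_nonneg hC (by linarith)
  have h2 : 0 ≤ dx * (1000*D - 62) := mul_nonneg hx (by linarith)
  have h3 : 0 ≤ dy * (1000*D - 62) := mul_nonneg hy (by linarith)
  nlinarith [h1, h2, h3]

end AuxMisc
/-- Vertical quadrilateral lemma. A coarse quadrilateral with
vertices `a 0, a 1, b 0, b 1`, whose sides are vertical geodesic segments
`V i j : [0, l i j] → X ⋈ Y` of the same orientation joining the
`D`-neighbourhoods of the vertices and diverging quickly from each other, has
two vertices on the same `X`-horosphere and the other two on the same
`Y`-horosphere, up to an error `M·D` with `M` depending only on `X ⋈ Y`. -/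
theorem statement_11 {X Y : Type*} [MetricSpace X] [MetricSpace Y]
    (HX : HoroSpace X) (HY : HoroSpace Y) (P : HoroMetric HX HY) :
    ∃ M : ℝ, 0 < M ∧
      ∀ (a b : Fin 2 → HoroProd HX HY) (D : ℝ)
        (V : Fin 2 → Fin 2 → ℝ → HoroProd HX HY) (l : Fin 2 → Fin 2 → ℝ),
        1 < D →
        (∀ i j, 2 * D < l i j) →
        (∀ i j, IsVerticalOn HX HY (V i j) (Icc 0 (l i j))) →
        (∀ i j, P.d (V i j 0) (a i) ≤ D) →
        (∀ i j, P.d (V i j (l i j)) (b j) ≤ D) →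
        (∀ i, ∀ t ∈ Icc (0 : ℝ) (l i 0), ∀ u ∈ Icc (0 : ℝ) (l i 1),
          t / 10 - D ≤ P.d (V i 0 t) (V i 1 u)) →
        (∀ j, ∀ t ∈ Icc (0 : ℝ) (l 0 j), ∀ u ∈ Icc (0 : ℝ) (l 1 j),
          t / 10 - D ≤ P.d (V 0 j (l 0 j - t)) (V 1 j u)) →
        ((∀ i j, HX.height ((V i j 0).1.1) < HX.height ((V i j (l i j)).1.1)) ∨
          (∀ i j, HX.height ((V i j (l i j)).1.1) < HX.height ((V i j 0).1.1))) →
        ((∀ i j, HX.height ((V i j 0).1.1) < HX.height ((V i j (l i j)).1.1)) →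
            dist (a 0).1.2 (a 1).1.2 ≤ M * D ∧ dist (b 0).1.1 (b 1).1.1 ≤ M * D) ∧
        ((∀ i j, HX.height ((V i j (l i j)).1.1) < HX.height ((V i j 0).1.1)) →
            dist (a 0).1.1 (a 1).1.1 ≤ M * D ∧ dist (b 0).1.2 (b 1).1.2 ≤ M * D) := by
  have hCnn := P.C_nonneg
  have hdXnn := HX.δ_nonneg
  have hdYnn := HY.δ_nonneg
  refine ⟨1000 * (1 + P.C + HX.δ + HY.δ), by nlinarith, ?_⟩
  intro a b D V l hD hl hV ha hb hc hd _hor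
  set K0 : ℝ := 7*D + P.C + 2*HX.δ + 2*HY.δ with hK0def
  have hK0nn : 0 ≤ K0 := by simp only [hK0def]; linarith
  have hlpos : ∀ i j, (0:ℝ) < l i j := fun i j => by linarith [hl i j]
  have hl2 : ∀ i j, 2*D ≤ l i j := fun i j => le_of_lt (hl i j)
  have hlmem : ∀ i j, l i j ∈ Icc (0:ℝ) (l i j) := fun i j => ⟨(hlpos i j).le, le_rfl⟩
  have h0mem : ∀ i j, (0:ℝ) ∈ Icc (0:ℝ) (l i j) := fun i j => ⟨le_rfl, (hlpos i j).le⟩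
  -- endpoint estimates
  have hXa : ∀ i j, dist ((V i j 0).1.1) ((a i).1.1) ≤ 2*D := by
    intro i j
    have h1 := P.two_d_ge (V i j 0) (a i)
    have h2 := ha i j
    have h3 : (0:ℝ) ≤ dist ((V i j 0).1.2) ((a i).1.2) := dist_nonneg
    linarith
  have hYa : ∀ i j, dist ((V i j 0).1.2) ((a i).1.2) ≤ 2*D := by
    intro i j
    have h1 := P.two_d_ge (V i j 0) (a i)
    have h2 := ha i j
    have h3 : (0:ℝ) ≤ dist ((V i j 0).1.1) ((a i).1.1) := dist_nonneg
    linarith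
  have hXb : ∀ i j, dist ((V i j (l i j)).1.1) ((b j).1.1) ≤ 2*D := by
    intro i j
    have h1 := P.two_d_ge (V i j (l i j)) (b j)
    have h2 := hb i j
    have h3 : (0:ℝ) ≤ dist ((V i j (l i j)).1.2) ((b j).1.2) := dist_nonneg
    linarith
  have hYb : ∀ i j, dist ((V i j (l i j)).1.2) ((b j).1.2) ≤ 2*D := by
    intro i j
    have h1 := P.two_d_ge (V i j (l i j)) (b j)
    have h2 := hb i j
    have h3 : (0:ℝ) ≤ dist ((V i j (l i j)).1.1) ((b j).1.1) := dist_nonneg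
    linarith
  have hha : ∀ i j, |HX.height ((V i j 0).1.1) - HX.height ((a i).1.1)| ≤ D :=
    fun i j => le_trans (P.height_lip _ _) (ha i j)
  have hhb : ∀ i j, |HX.height ((V i j (l i j)).1.1) - HX.height ((b j).1.1)| ≤ D :=
    fun i j => le_trans (P.height_lip _ _) (hb i j)
  have hXbot : ∀ i j j', dist ((V i j 0).1.1) ((V i j' 0).1.1) ≤ 4*D := by
    intro i j j'
    have h1 := dist_triangle ((V i j 0).1.1) ((a i).1.1) ((V i j' 0).1.1)
    have h2 : dist ((a i).1.1) ((V i j' 0).1.1) = dist ((V i j' 0).1.1) ((a i).1.1) :=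
      dist_comm _ _
    linarith [hXa i j, hXa i j']
  have hYbot : ∀ i j j', dist ((V i j 0).1.2) ((V i j' 0).1.2) ≤ 4*D := by
    intro i j j'
    have h1 := dist_triangle ((V i j 0).1.2) ((a i).1.2) ((V i j' 0).1.2)
    have h2 : dist ((a i).1.2) ((V i j' 0).1.2) = dist ((V i j' 0).1.2) ((a i).1.2) :=
      dist_comm _ _
    linarith [hYa i j, hYa i j']
  have hXtop : ∀ i i' j, dist ((V i j (l i j)).1.1) ((V i' j (l i' j)).1.1) ≤ 4*D := by
    intro i i' j
    have h1 := dist_triangle ((V i j (l i j)).1.1) ((b j).1.1) ((V i' j (l i' j)).1.1)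
    have h2 : dist ((b j).1.1) ((V i' j (l i' j)).1.1) =
        dist ((V i' j (l i' j)).1.1) ((b j).1.1) := dist_comm _ _
    linarith [hXb i j, hXb i' j]
  have hYtop : ∀ i i' j, dist ((V i j (l i j)).1.2) ((V i' j (l i' j)).1.2) ≤ 4*D := by
    intro i i' j
    have h1 := dist_triangle ((V i j (l i j)).1.2) ((b j).1.2) ((V i' j (l i' j)).1.2)
    have h2 : dist ((b j).1.2) ((V i' j (l i' j)).1.2) =
        dist ((V i' j (l i' j)).1.2) ((b j).1.2) := dist_comm _ _
    linarith [hYb i j, hYb i' j]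
  have hhbot : ∀ i j j',
      |HX.height ((V i j 0).1.1) - HX.height ((V i j' 0).1.1)| ≤ 2*D := by
    intro i j j'
    have h1 := abs_sub_le (HX.height ((V i j 0).1.1)) (HX.height ((a i).1.1))
      (HX.height ((V i j' 0).1.1))
    have h2 : |HX.height ((a i).1.1) - HX.height ((V i j' 0).1.1)| =
        |HX.height ((V i j' 0).1.1) - HX.height ((a i).1.1)| := abs_sub_comm _ _
    linarith [hha i j, hha i j']
  have hhtop : ∀ i i' j,
      |HX.height ((V i j (l i j)).1.1) - HX.height ((V i' j (l i' j)).1.1)| ≤ 2*D := by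
    intro i i' j
    have h1 := abs_sub_le (HX.height ((V i j (l i j)).1.1)) (HX.height ((b j).1.1))
      (HX.height ((V i' j (l i' j)).1.1))
    have h2 : |HX.height ((b j).1.1) - HX.height ((V i' j (l i' j)).1.1)| =
        |HX.height ((V i' j (l i' j)).1.1) - HX.height ((b j).1.1)| := abs_sub_comm _ _
    linarith [hhb i j, hhb i' j]
  have hYh : ∀ i j t, HY.height ((V i j t).1.2) = -HX.height ((V i j t).1.1) := by
    intro i j t
    have := (V i j t).2
    linarith
  constructor
  · -- upward case
    intro hup
    have haff : ∀ i j, ∀ t ∈ Icc (0:ℝ) (l i j),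
        HX.height ((V i j t).1.1) = HX.height ((V i j 0).1.1) + t := by
      intro i j
      exact hp_affine_up _ (hlpos i j) (hV i j).2.2 (hup i j)
    have haffY : ∀ i j, ∀ t ∈ Icc (0:ℝ) (l i j),
        HY.height ((V i j t).1.2) = -(HX.height ((V i j 0).1.1) + t) := by
      intro i j t ht
      have h1 := hYh i j t
      have h2 := haff i j t ht
      rw [h1, h2]
    have hUX : ∀ i j, UpVertOn HX (fun t => (V i j t).1.1) (l i j) :=
      fun i j => ⟨(hV i j).1, haff i j⟩
    have hUYr : ∀ i j, UpVertOn HY (fun s => (V i j (l i j - s)).1.2) (l i j) := by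
      intro i j
      constructor
      · intro s hs u hu
        have h1 := (hV i j).2.1 (l i j - s) ⟨by linarith [hs.2], by linarith [hs.1]⟩
          (l i j - u) ⟨by linarith [hu.2], by linarith [hu.1]⟩
        simp only at h1 ⊢
        rw [h1, show l i j - s - (l i j - u) = -(s - u) by ring, abs_neg]
      · intro s hs
        have h1 := haffY i j (l i j - s) ⟨by linarith [hs.2], by linarith [hs.1]⟩
        have h2 := haffY i j (l i j) (hlmem i j)
        simp only
        rw [sub_zero, h1, h2]
        ring
    -- divergence transferred to the Y components (from hypothesis (c))
    have hdivY : ∀ i : Fin 2, ∀ t ∈ Icc (0:ℝ) (l i 0), ∀ u ∈ Icc (0:ℝ) (l i 1),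
        t/10 - K0 ≤ dist ((V i 0 t).1.2) ((V i 1 u).1.2) := by
      intro i t ht u hu
      have h1 := hc i t ht u hu
      have h2 := (abs_le.mp (P.approx (V i 0 t) (V i 1 u))).2
      have h3 := hp_vCR HX (hUX i 0) (hUX i 1) (hXbot i 0 1) (hhbot i 0 1)
        (hl2 i 0) (hl2 i 1) ht hu
      have h4 : |HX.height ((V i 0 t).1.1) - HX.height ((V i 1 u).1.1)| =
          |HX.height ((V i 0 0).1.1) + t - (HX.height ((V i 1 0).1.1) + u)| := by
        rw [haff i 0 t ht, haff i 1 u hu]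
      rw [← h4] at h3
      simp only [hK0def]
      linarith
    -- divergence transferred to the X components (from hypothesis (d))
    have hdivX : ∀ j : Fin 2, ∀ t ∈ Icc (0:ℝ) (l 0 j), ∀ u ∈ Icc (0:ℝ) (l 1 j),
        t/10 - K0 ≤ dist ((V 0 j (l 0 j - t)).1.1) ((V 1 j u).1.1) := by
      intro j t ht u hu
      have h1 := hd j t ht u hu
      have h2 := (abs_le.mp (P.approx (V 0 j (l 0 j - t)) (V 1 j u))).2
      have hA' : dist ((V 0 j (l 0 j - 0)).1.2) ((V 1 j (l 1 j - 0)).1.2) ≤ 4*D := by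
        rw [sub_zero, sub_zero]; exact hYtop 0 1 j
      have hB' : |HY.height ((V 0 j (l 0 j - 0)).1.2) -
          HY.height ((V 1 j (l 1 j - 0)).1.2)| ≤ 2*D := by
        rw [sub_zero, sub_zero, hYh 0 j (l 0 j), hYh 1 j (l 1 j), hp_abs_neg_sub]
        exact hhtop 0 1 j
      have h3 := hp_vCR HY (hUYr 0 j) (hUYr 1 j) hA' hB' (hl2 0 j) (hl2 1 j)
        ht (⟨by linarith [hu.2], by linarith [hu.1]⟩ : l 1 j - u ∈ Icc (0:ℝ) (l 1 j))
      rw [show l 1 j - (l 1 j - u) = u by ring] at h3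
      rw [sub_zero, sub_zero] at h3
      have h4 : |HY.height ((V 0 j (l 0 j)).1.2) + t -
          (HY.height ((V 1 j (l 1 j)).1.2) + (l 1 j - u))| =
          |HX.height ((V 0 j (l 0 j - t)).1.1) - HX.height ((V 1 j u).1.1)| := by
        rw [haffY 0 j (l 0 j) (hlmem 0 j), haffY 1 j (l 1 j) (hlmem 1 j),
          haff 0 j (l 0 j - t) ⟨by linarith [ht.2], by linarith [ht.1]⟩,
          haff 1 j u hu]
        rw [show -(HX.height ((V 0 j 0).1.1) + l 0 j) + t -
            (-(HX.height ((V 1 j 0).1.1) + l 1 j) + (l 1 j - u)) =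
            -(HX.height ((V 0 j 0).1.1) + (l 0 j - t) -
              (HX.height ((V 1 j 0).1.1) + u)) by ring, abs_neg]
      rw [h4] at h3
      simp only [hK0def]
      linarith
    constructor
    · -- dist (a 0).1.2 (a 1).1.2 ≤ M * D  via core lemma in Y on reversed components
      have hcore := hp_core HY hD hK0nn (hl 0 0) (hl 0 1) (hl 1 0) (hl 1 1)
        (hUYr 0 0) (hUYr 0 1) (hUYr 1 0) (hUYr 1 1)
        (hbot0 := by
          show dist ((V 0 0 (l 0 0 - 0)).1.2) ((V 1 0 (l 1 0 - 0)).1.2) ≤ 4*D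
          rw [sub_zero, sub_zero]; exact hYtop 0 1 0)
        (hgbot0 := by
          show |HY.height ((V 0 0 (l 0 0 - 0)).1.2) -
            HY.height ((V 1 0 (l 1 0 - 0)).1.2)| ≤ 2*D
          rw [sub_zero, sub_zero, hYh 0 0 (l 0 0), hYh 1 0 (l 1 0), hp_abs_neg_sub]
          exact hhtop 0 1 0)
        (hbot1 := by
          show dist ((V 0 1 (l 0 1 - 0)).1.2) ((V 1 1 (l 1 1 - 0)).1.2) ≤ 4*D
          rw [sub_zero, sub_zero]; exact hYtop 0 1 1)
        (hgbot1 := by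
          show |HY.height ((V 0 1 (l 0 1 - 0)).1.2) -
            HY.height ((V 1 1 (l 1 1 - 0)).1.2)| ≤ 2*D
          rw [sub_zero, sub_zero, hYh 0 1 (l 0 1), hYh 1 1 (l 1 1), hp_abs_neg_sub]
          exact hhtop 0 1 1)
        (htop0 := by
          show dist ((V 0 0 (l 0 0 - l 0 0)).1.2) ((V 0 1 (l 0 1 - l 0 1)).1.2) ≤ 4*D
          rw [sub_self, sub_self]; exact hYbot 0 0 1)
        (htop1 := by
          show dist ((V 1 0 (l 1 0 - l 1 0)).1.2) ((V 1 1 (l 1 1 - l 1 1)).1.2) ≤ 4*D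
          rw [sub_self, sub_self]; exact hYbot 1 0 1)
        (hgtop0 := by
          show |(HY.height ((V 0 0 (l 0 0 - 0)).1.2) + l 0 0) -
            (HY.height ((V 0 1 (l 0 1 - 0)).1.2) + l 0 1)| ≤ 2*D
          rw [sub_zero, sub_zero, haffY 0 0 (l 0 0) (hlmem 0 0),
            haffY 0 1 (l 0 1) (hlmem 0 1)]
          rw [show (-(HX.height ((V 0 0 0).1.1) + l 0 0) + l 0 0) -
              (-(HX.height ((V 0 1 0).1.1) + l 0 1) + l 0 1) =
              -(HX.height ((V 0 0 0).1.1) - HX.height ((V 0 1 0).1.1)) by ring, abs_neg]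
          exact hhbot 0 0 1)
        (hgtop1 := by
          show |(HY.height ((V 1 0 (l 1 0 - 0)).1.2) + l 1 0) -
            (HY.height ((V 1 1 (l 1 1 - 0)).1.2) + l 1 1)| ≤ 2*D
          rw [sub_zero, sub_zero, haffY 1 0 (l 1 0) (hlmem 1 0),
            haffY 1 1 (l 1 1) (hlmem 1 1)]
          rw [show (-(HX.height ((V 1 0 0).1.1) + l 1 0) + l 1 0) -
              (-(HX.height ((V 1 1 0).1.1) + l 1 1) + l 1 1) =
              -(HX.height ((V 1 0 0).1.1) - HX.height ((V 1 1 0).1.1)) by ring, abs_neg]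
          exact hhbot 1 0 1)
        (hdiv0 := by
          intro t ht u hu
          show t/10 - K0 ≤ dist ((V 0 0 (l 0 0 - (l 0 0 - t))).1.2) ((V 0 1 (l 0 1 - u)).1.2)
          rw [show l 0 0 - (l 0 0 - t) = t by ring]
          exact hdivY 0 t ht (l 0 1 - u) ⟨by linarith [hu.2], by linarith [hu.1]⟩)
        (hdiv1 := by
          intro t ht u hu
          show t/10 - K0 ≤ dist ((V 1 0 (l 1 0 - (l 1 0 - t))).1.2) ((V 1 1 (l 1 1 - u)).1.2)
          rw [show l 1 0 - (l 1 0 - t) = t by ring]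
          exact hdivY 1 t ht (l 1 1 - u) ⟨by linarith [hu.2], by linarith [hu.1]⟩)
      rw [sub_self, sub_self] at hcore
      -- hcore : dist ((V 0 0 0).1.2) ((V 1 0 0).1.2) ≤ 206*D + 42*HY.δ + 10*K0
      have htri : dist ((a 0).1.2) ((a 1).1.2) ≤ dist ((a 0).1.2) ((V 0 0 0).1.2) +
          dist ((V 0 0 0).1.2) ((V 1 0 0).1.2) + dist ((V 1 0 0).1.2) ((a 1).1.2) :=
        dist_triangle4 _ _ _ _
      have e1 : dist ((a 0).1.2) ((V 0 0 0).1.2) = dist ((V 0 0 0).1.2) ((a 0).1.2) :=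
        dist_comm _ _
      have harith := hp_arith hD hCnn hdXnn hdYnn
      have hK0e : 10*K0 = 70*D + 10*P.C + 20*HX.δ + 20*HY.δ := by
        simp only [hK0def]; ring
      linarith [hYa 0 0, hYa 1 0]
    · -- dist (b 0).1.1 (b 1).1.1 ≤ M * D  via core lemma in X
      have hgtop0' := hhtop 0 1 0
      rw [haff 0 0 (l 0 0) (hlmem 0 0), haff 1 0 (l 1 0) (hlmem 1 0)] at hgtop0'
      have hgtop1' := hhtop 0 1 1
      rw [haff 0 1 (l 0 1) (hlmem 0 1), haff 1 1 (l 1 1) (hlmem 1 1)] at hgtop1'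
      have hcore := hp_core HX hD hK0nn (hl 0 0) (hl 1 0) (hl 0 1) (hl 1 1)
        (hUX 0 0) (hUX 1 0) (hUX 0 1) (hUX 1 1)
        (hbot0 := hXbot 0 0 1) (hgbot0 := hhbot 0 0 1)
        (hbot1 := hXbot 1 0 1) (hgbot1 := hhbot 1 0 1)
        (htop0 := hXtop 0 1 0) (htop1 := hXtop 0 1 1)
        (hgtop0 := hgtop0') (hgtop1 := hgtop1')
        (hdiv0 := fun t ht u hu => hdivX 0 t ht u hu)
        (hdiv1 := fun t ht u hu => hdivX 1 t ht u hu)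
      -- hcore : dist ((V 0 0 (l 0 0)).1.1) ((V 0 1 (l 0 1)).1.1) ≤ 206*D + 42*HX.δ + 10*K0
      have htri : dist ((b 0).1.1) ((b 1).1.1) ≤ dist ((b 0).1.1) ((V 0 0 (l 0 0)).1.1) +
          dist ((V 0 0 (l 0 0)).1.1) ((V 0 1 (l 0 1)).1.1) +
          dist ((V 0 1 (l 0 1)).1.1) ((b 1).1.1) := dist_triangle4 _ _ _ _
      have e1 : dist ((b 0).1.1) ((V 0 0 (l 0 0)).1.1) =
          dist ((V 0 0 (l 0 0)).1.1) ((b 0).1.1) := dist_comm _ _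
      have harith := hp_arith hD hCnn hdXnn hdYnn
      have hK0e : 10*K0 = 70*D + 10*P.C + 20*HX.δ + 20*HY.δ := by
        simp only [hK0def]; ring
      linarith [hXb 0 0, hXb 0 1]
  · -- downward case
    intro hdown
    have haff : ∀ i j, ∀ t ∈ Icc (0:ℝ) (l i j),
        HX.height ((V i j t).1.1) = HX.height ((V i j 0).1.1) - t := by
      intro i j
      exact hp_affine_down _ (hlpos i j) (hV i j).2.2 (hdown i j)
    have haffY : ∀ i j, ∀ t ∈ Icc (0:ℝ) (l i j),
        HY.height ((V i j t).1.2) = -(HX.height ((V i j 0).1.1) - t) := by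
      intro i j t ht
      rw [hYh i j t, haff i j t ht]
    have hUYd : ∀ i j, UpVertOn HY (fun t => (V i j t).1.2) (l i j) := by
      intro i j
      refine ⟨(hV i j).2.1, ?_⟩
      intro t ht
      simp only
      rw [haffY i j t ht, haffY i j 0 (h0mem i j)]
      ring
    have hUXr : ∀ i j, UpVertOn HX (fun s => (V i j (l i j - s)).1.1) (l i j) := by
      intro i j
      constructor
      · intro s hs u hu
        have h1 := (hV i j).1 (l i j - s) ⟨by linarith [hs.2], by linarith [hs.1]⟩
          (l i j - u) ⟨by linarith [hu.2], by linarith [hu.1]⟩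
        simp only at h1 ⊢
        rw [h1, show l i j - s - (l i j - u) = -(s - u) by ring, abs_neg]
      · intro s hs
        have h1 := haff i j (l i j - s) ⟨by linarith [hs.2], by linarith [hs.1]⟩
        have h2 := haff i j (l i j) (hlmem i j)
        simp only
        rw [sub_zero, h1, h2]
        ring
    -- divergence transferred to the X components (from hypothesis (c))
    have hdivXd : ∀ i : Fin 2, ∀ t ∈ Icc (0:ℝ) (l i 0), ∀ u ∈ Icc (0:ℝ) (l i 1),
        t/10 - K0 ≤ dist ((V i 0 t).1.1) ((V i 1 u).1.1) := by
      intro i t ht u hu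
      have h1 := hc i t ht u hu
      have h2 := (abs_le.mp (P.approx (V i 0 t) (V i 1 u))).2
      have hB' : |HY.height ((V i 0 0).1.2) - HY.height ((V i 1 0).1.2)| ≤ 2*D := by
        rw [hYh i 0 0, hYh i 1 0, hp_abs_neg_sub]
        exact hhbot i 0 1
      have h3 := hp_vCR HY (hUYd i 0) (hUYd i 1) (hYbot i 0 1) hB'
        (hl2 i 0) (hl2 i 1) ht hu
      have h4 : |HY.height ((V i 0 0).1.2) + t - (HY.height ((V i 1 0).1.2) + u)| =
          |HX.height ((V i 0 t).1.1) - HX.height ((V i 1 u).1.1)| := by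
        rw [hYh i 0 0, hYh i 1 0, haff i 0 t ht, haff i 1 u hu]
        rw [show -HX.height ((V i 0 0).1.1) + t - (-HX.height ((V i 1 0).1.1) + u) =
          -(HX.height ((V i 0 0).1.1) - t - (HX.height ((V i 1 0).1.1) - u)) by ring,
          abs_neg]
      rw [h4] at h3
      simp only [hK0def]
      linarith
    -- divergence transferred to the Y components (from hypothesis (d))
    have hdivYd : ∀ j : Fin 2, ∀ t ∈ Icc (0:ℝ) (l 0 j), ∀ u ∈ Icc (0:ℝ) (l 1 j),
        t/10 - K0 ≤ dist ((V 0 j (l 0 j - t)).1.2) ((V 1 j u).1.2) := by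
      intro j t ht u hu
      have h1 := hd j t ht u hu
      have h2 := (abs_le.mp (P.approx (V 0 j (l 0 j - t)) (V 1 j u))).2
      have hA' : dist ((V 0 j (l 0 j - 0)).1.1) ((V 1 j (l 1 j - 0)).1.1) ≤ 4*D := by
        rw [sub_zero, sub_zero]; exact hXtop 0 1 j
      have hB' : |HX.height ((V 0 j (l 0 j - 0)).1.1) -
          HX.height ((V 1 j (l 1 j - 0)).1.1)| ≤ 2*D := by
        rw [sub_zero, sub_zero]; exact hhtop 0 1 j
      have h3 := hp_vCR HX (hUXr 0 j) (hUXr 1 j) hA' hB' (hl2 0 j) (hl2 1 j)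
        ht (⟨by linarith [hu.2], by linarith [hu.1]⟩ : l 1 j - u ∈ Icc (0:ℝ) (l 1 j))
      rw [show l 1 j - (l 1 j - u) = u by ring] at h3
      rw [sub_zero, sub_zero] at h3
      have h4 : |HX.height ((V 0 j (l 0 j)).1.1) + t -
          (HX.height ((V 1 j (l 1 j)).1.1) + (l 1 j - u))| =
          |HX.height ((V 0 j (l 0 j - t)).1.1) - HX.height ((V 1 j u).1.1)| := by
        rw [haff 0 j (l 0 j) (hlmem 0 j), haff 1 j (l 1 j) (hlmem 1 j),
          haff 0 j (l 0 j - t) ⟨by linarith [ht.2], by linarith [ht.1]⟩,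
          haff 1 j u hu]
        rw [show HX.height ((V 0 j 0).1.1) - l 0 j + t -
            (HX.height ((V 1 j 0).1.1) - l 1 j + (l 1 j - u)) =
            HX.height ((V 0 j 0).1.1) - (l 0 j - t) -
              (HX.height ((V 1 j 0).1.1) - u) by ring]
      rw [h4] at h3
      simp only [hK0def]
      linarith
    constructor
    · -- dist (a 0).1.1 (a 1).1.1 ≤ M * D  via core lemma in X on reversed components
      have hcore := hp_core HX hD hK0nn (hl 0 0) (hl 0 1) (hl 1 0) (hl 1 1)
        (hUXr 0 0) (hUXr 0 1) (hUXr 1 0) (hUXr 1 1)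
        (hbot0 := by
          show dist ((V 0 0 (l 0 0 - 0)).1.1) ((V 1 0 (l 1 0 - 0)).1.1) ≤ 4*D
          rw [sub_zero, sub_zero]; exact hXtop 0 1 0)
        (hgbot0 := by
          show |HX.height ((V 0 0 (l 0 0 - 0)).1.1) -
            HX.height ((V 1 0 (l 1 0 - 0)).1.1)| ≤ 2*D
          rw [sub_zero, sub_zero]; exact hhtop 0 1 0)
        (hbot1 := by
          show dist ((V 0 1 (l 0 1 - 0)).1.1) ((V 1 1 (l 1 1 - 0)).1.1) ≤ 4*D
          rw [sub_zero, sub_zero]; exact hXtop 0 1 1)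
        (hgbot1 := by
          show |HX.height ((V 0 1 (l 0 1 - 0)).1.1) -
            HX.height ((V 1 1 (l 1 1 - 0)).1.1)| ≤ 2*D
          rw [sub_zero, sub_zero]; exact hhtop 0 1 1)
        (htop0 := by
          show dist ((V 0 0 (l 0 0 - l 0 0)).1.1) ((V 0 1 (l 0 1 - l 0 1)).1.1) ≤ 4*D
          rw [sub_self, sub_self]; exact hXbot 0 0 1)
        (htop1 := by
          show dist ((V 1 0 (l 1 0 - l 1 0)).1.1) ((V 1 1 (l 1 1 - l 1 1)).1.1) ≤ 4*D
          rw [sub_self, sub_self]; exact hXbot 1 0 1)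
        (hgtop0 := by
          show |(HX.height ((V 0 0 (l 0 0 - 0)).1.1) + l 0 0) -
            (HX.height ((V 0 1 (l 0 1 - 0)).1.1) + l 0 1)| ≤ 2*D
          rw [sub_zero, sub_zero, haff 0 0 (l 0 0) (hlmem 0 0),
            haff 0 1 (l 0 1) (hlmem 0 1)]
          rw [show (HX.height ((V 0 0 0).1.1) - l 0 0 + l 0 0) -
              (HX.height ((V 0 1 0).1.1) - l 0 1 + l 0 1) =
              HX.height ((V 0 0 0).1.1) - HX.height ((V 0 1 0).1.1) by ring]
          exact hhbot 0 0 1)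
        (hgtop1 := by
          show |(HX.height ((V 1 0 (l 1 0 - 0)).1.1) + l 1 0) -
            (HX.height ((V 1 1 (l 1 1 - 0)).1.1) + l 1 1)| ≤ 2*D
          rw [sub_zero, sub_zero, haff 1 0 (l 1 0) (hlmem 1 0),
            haff 1 1 (l 1 1) (hlmem 1 1)]
          rw [show (HX.height ((V 1 0 0).1.1) - l 1 0 + l 1 0) -
              (HX.height ((V 1 1 0).1.1) - l 1 1 + l 1 1) =
              HX.height ((V 1 0 0).1.1) - HX.height ((V 1 1 0).1.1) by ring]
          exact hhbot 1 0 1)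
        (hdiv0 := by
          intro t ht u hu
          show t/10 - K0 ≤ dist ((V 0 0 (l 0 0 - (l 0 0 - t))).1.1) ((V 0 1 (l 0 1 - u)).1.1)
          rw [show l 0 0 - (l 0 0 - t) = t by ring]
          exact hdivXd 0 t ht (l 0 1 - u) ⟨by linarith [hu.2], by linarith [hu.1]⟩)
        (hdiv1 := by
          intro t ht u hu
          show t/10 - K0 ≤ dist ((V 1 0 (l 1 0 - (l 1 0 - t))).1.1) ((V 1 1 (l 1 1 - u)).1.1)
          rw [show l 1 0 - (l 1 0 - t) = t by ring]
          exact hdivXd 1 t ht (l 1 1 - u) ⟨by linarith [hu.2], by linarith [hu.1]⟩)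
      rw [sub_self, sub_self] at hcore
      -- hcore : dist ((V 0 0 0).1.1) ((V 1 0 0).1.1) ≤ 206*D + 42*HX.δ + 10*K0
      have htri : dist ((a 0).1.1) ((a 1).1.1) ≤ dist ((a 0).1.1) ((V 0 0 0).1.1) +
          dist ((V 0 0 0).1.1) ((V 1 0 0).1.1) + dist ((V 1 0 0).1.1) ((a 1).1.1) :=
        dist_triangle4 _ _ _ _
      have e1 : dist ((a 0).1.1) ((V 0 0 0).1.1) = dist ((V 0 0 0).1.1) ((a 0).1.1) :=
        dist_comm _ _
      have harith := hp_arith hD hCnn hdXnn hdYnn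
      have hK0e : 10*K0 = 70*D + 10*P.C + 20*HX.δ + 20*HY.δ := by
        simp only [hK0def]; ring
      linarith [hXa 0 0, hXa 1 0]
    · -- dist (b 0).1.2 (b 1).1.2 ≤ M * D  via core lemma in Y
      have hgbot0' : |HY.height ((V 0 0 0).1.2) - HY.height ((V 0 1 0).1.2)| ≤ 2*D := by
        rw [hYh 0 0 0, hYh 0 1 0, hp_abs_neg_sub]; exact hhbot 0 0 1
      have hgbot1' : |HY.height ((V 1 0 0).1.2) - HY.height ((V 1 1 0).1.2)| ≤ 2*D := by
        rw [hYh 1 0 0, hYh 1 1 0, hp_abs_neg_sub]; exact hhbot 1 0 1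
      have hgtop0' : |(HY.height ((V 0 0 0).1.2) + l 0 0) -
          (HY.height ((V 1 0 0).1.2) + l 1 0)| ≤ 2*D := by
        rw [hYh 0 0 0, hYh 1 0 0]
        have := hhtop 0 1 0
        rw [haff 0 0 (l 0 0) (hlmem 0 0), haff 1 0 (l 1 0) (hlmem 1 0)] at this
        rw [show -HX.height ((V 0 0 0).1.1) + l 0 0 - (-HX.height ((V 1 0 0).1.1) + l 1 0) =
          -(HX.height ((V 0 0 0).1.1) - l 0 0 - (HX.height ((V 1 0 0).1.1) - l 1 0)) by ring,
          abs_neg]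
        exact this
      have hgtop1' : |(HY.height ((V 0 1 0).1.2) + l 0 1) -
          (HY.height ((V 1 1 0).1.2) + l 1 1)| ≤ 2*D := by
        rw [hYh 0 1 0, hYh 1 1 0]
        have := hhtop 0 1 1
        rw [haff 0 1 (l 0 1) (hlmem 0 1), haff 1 1 (l 1 1) (hlmem 1 1)] at this
        rw [show -HX.height ((V 0 1 0).1.1) + l 0 1 - (-HX.height ((V 1 1 0).1.1) + l 1 1) =
          -(HX.height ((V 0 1 0).1.1) - l 0 1 - (HX.height ((V 1 1 0).1.1) - l 1 1)) by ring,
          abs_neg]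
        exact this
      have hcore := hp_core HY hD hK0nn (hl 0 0) (hl 1 0) (hl 0 1) (hl 1 1)
        (hUYd 0 0) (hUYd 1 0) (hUYd 0 1) (hUYd 1 1)
        (hbot0 := hYbot 0 0 1) (hgbot0 := hgbot0')
        (hbot1 := hYbot 1 0 1) (hgbot1 := hgbot1')
        (htop0 := hYtop 0 1 0) (htop1 := hYtop 0 1 1)
        (hgtop0 := hgtop0') (hgtop1 := hgtop1')
        (hdiv0 := fun t ht u hu => hdivYd 0 t ht u hu)
        (hdiv1 := fun t ht u hu => hdivYd 1 t ht u hu)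
      -- hcore : dist ((V 0 0 (l 0 0)).1.2) ((V 0 1 (l 0 1)).1.2) ≤ 206*D + 42*HY.δ + 10*K0
      have htri : dist ((b 0).1.2) ((b 1).1.2) ≤ dist ((b 0).1.2) ((V 0 0 (l 0 0)).1.2) +
          dist ((V 0 0 (l 0 0)).1.2) ((V 0 1 (l 0 1)).1.2) +
          dist ((V 0 1 (l 0 1)).1.2) ((b 1).1.2) := dist_triangle4 _ _ _ _
      have e1 : dist ((b 0).1.2) ((V 0 0 (l 0 0)).1.2) =
          dist ((V 0 0 (l 0 0)).1.2) ((b 0).1.2) := dist_comm _ _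
      have harith := hp_arith hD hCnn hdXnn hdYnn
      have hK0e : 10*K0 = 70*D + 10*P.C + 20*HX.δ + 20*HY.δ := by
        simp only [hK0def]; ring
      linarith [hYb 0 0, hYb 0 1]
end
end
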